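/- arXiv:1001.1396 — 5 statements merged into one kernel-verified Lean document; each statement's English description precedes it below -/
import Mathlib

section
/- Let a_{i,j,k,l}, 1 ≤ i,j,k,l ≤ n, be real numbers with a_{i,j,k,l} = 0 if i = j or k = l, Σ a_{i,j,k,l} = 0, a_{i,j,k,l} = a_{i,j,l,k} = a_{j,i,l,k}, and sup |a_{i,j,k,l}| ≤ b. Let π be uniform on S_n, V₁ = Σ_{s≠t} a_{s,t,π(s),π(t)}, and W₁ = n^{−3/2}V₁. Then for all t > 0, P(W₁ ≥ t) ≤ exp(−t²/(2φ_{b,n})) and P(W₁ ≤ −t) ≤ exp(−t²/(2φ_{b,n})), where φ_{b,n} = 8(2n−1)b²(6 + 4/n + 1/n²)/n. -/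
open Finset

open scoped Classical

lemma exp_abs_sub (x y : ℝ) : |Real.exp x - Real.exp y| ≤ |x - y| * (Real.exp x + Real.exp y) := by
  wlog h : y ≤ x with H
  · rw [abs_sub_comm, abs_sub_comm x y, add_comm]
    exact H y x (le_of_not_ge h)
  have hxy : Real.exp y ≤ Real.exp x := Real.exp_le_exp.2 h
  rw [abs_of_nonneg (sub_nonneg.2 hxy), abs_of_nonneg (sub_nonneg.2 h)]
  have h1 : (y - x) + 1 ≤ Real.exp (y - x) := Real.add_one_le_exp _
  have h2 : Real.exp x * Real.exp (y - x) = Real.exp y := by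
    rw [← Real.exp_add]; ring_nf
  nlinarith [Real.exp_pos x, Real.exp_pos y]

lemma conc_abstract {α ι : Type*} [Fintype α] [Nonempty α]
    (B : Finset ι) (act : α → ι → α)
    (hact : ∀ p, ∀ τ ∈ B, act (act p τ) τ = p)
    (f : α → ℝ) (F : α → α → ℝ)
    (hanti : ∀ p q, F q p = - F p q)
    (hF : ∀ p, ∑ τ ∈ B, F p (act p τ) = (B.card : ℝ) * f p)
    (hBne : B.Nonempty)
    (K : ℝ) (hK : 0 < K)
    (hbd : ∀ p, ∀ τ ∈ B, |f p - f (act p τ)| * |F p (act p τ)| ≤ K)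
    (t : ℝ) (ht : 0 < t) :
    ((univ.filter fun p : α => t ≤ f p).card : ℝ) / (Fintype.card α) ≤
      Real.exp (-(t ^ 2 / (2 * K))) := by
  classical
  set m : ℝ → ℝ := fun θ => ∑ p : α, Real.exp (θ * f p) with hm
  -- reindexing equivalence
  have hre : ∀ (τ : ι), τ ∈ B → ∀ (H : α → ℝ), ∑ p : α, H (act p τ) = ∑ p : α, H p := by
    intro τ hτ H
    exact Fintype.sum_bijective (fun p => act p τ)
      (Function.bijective_iff_has_inverse.2 ⟨fun p => act p τ,
        fun p => hact p τ hτ, fun p => hact p τ hτ⟩) _ _ (fun p => rfl)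
  -- step 1 : derivative bound
  have step1 : ∀ θ : ℝ, 0 ≤ θ → ∑ p : α, f p * Real.exp (θ * f p) ≤ θ * K * m θ := by
    intro θ hθ
    have hcard : (0:ℝ) < (B.card : ℝ) := by
      exact_mod_cast Finset.card_pos.2 hBne
    set T : ℝ := ∑ τ ∈ B, ∑ p : α, F p (act p τ) * Real.exp (θ * f p) with hT
    have hT1 : T = (B.card : ℝ) * ∑ p : α, f p * Real.exp (θ * f p) := by
      rw [hT, Finset.sum_comm]
      rw [Finset.mul_sum]
      refine Finset.sum_congr rfl fun p _ => ?_
      rw [← Finset.sum_mul, hF p]; ring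
    have hT2 : T = - ∑ τ ∈ B, ∑ p : α, F p (act p τ) * Real.exp (θ * f (act p τ)) := by
      rw [hT, ← Finset.sum_neg_distrib]
      refine Finset.sum_congr rfl fun τ hτ => ?_
      rw [← Finset.sum_neg_distrib]
      calc ∑ p : α, F p (act p τ) * Real.exp (θ * f p)
          = ∑ p : α, F (act p τ) (act (act p τ) τ) * Real.exp (θ * f (act p τ)) := by
            exact (hre τ hτ (fun q => F q (act q τ) * Real.exp (θ * f q))).symm
        _ = ∑ p : α, -(F p (act p τ) * Real.exp (θ * f (act p τ))) := by
            refine Finset.sum_congr rfl fun p _ => ?_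
            rw [hact p τ hτ, hanti]; ring
    have h2T : 2 * T ≤ θ * K * (2 * (B.card : ℝ) * m θ) := by
      have hkey : 2 * T = ∑ τ ∈ B, ∑ p : α,
          F p (act p τ) * (Real.exp (θ * f p) - Real.exp (θ * f (act p τ))) := by
        rw [two_mul]
        nth_rewrite 1 [hT]
        nth_rewrite 1 [hT2]
        rw [← sub_eq_add_neg, ← Finset.sum_sub_distrib]
        refine Finset.sum_congr rfl fun τ hτ => ?_
        rw [← Finset.sum_sub_distrib]
        refine Finset.sum_congr rfl fun p _ => ?_
        ring
      rw [hkey]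
      have hbound : ∀ τ ∈ B, ∀ p : α,
          F p (act p τ) * (Real.exp (θ * f p) - Real.exp (θ * f (act p τ)))
            ≤ θ * K * (Real.exp (θ * f p) + Real.exp (θ * f (act p τ))) := by
        intro τ hτ p
        calc F p (act p τ) * (Real.exp (θ * f p) - Real.exp (θ * f (act p τ)))
            ≤ |F p (act p τ)| * |Real.exp (θ * f p) - Real.exp (θ * f (act p τ))| := by
              rw [← abs_mul]; exact le_abs_self _
          _ ≤ |F p (act p τ)| * (|θ * f p - θ * f (act p τ)| *
                (Real.exp (θ * f p) + Real.exp (θ * f (act p τ)))) := by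
              exact mul_le_mul_of_nonneg_left (exp_abs_sub _ _) (abs_nonneg _)
          _ = (|f p - f (act p τ)| * |F p (act p τ)|) * θ *
                (Real.exp (θ * f p) + Real.exp (θ * f (act p τ))) := by
              rw [← mul_sub, abs_mul, abs_of_nonneg hθ]; ring
          _ ≤ K * θ * (Real.exp (θ * f p) + Real.exp (θ * f (act p τ))) := by
              refine mul_le_mul_of_nonneg_right (mul_le_mul_of_nonneg_right
                (hbd p τ hτ) hθ) ?_
              positivity
          _ = θ * K * (Real.exp (θ * f p) + Real.exp (θ * f (act p τ))) := by ring
      calc ∑ τ ∈ B, ∑ p : α,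
            F p (act p τ) * (Real.exp (θ * f p) - Real.exp (θ * f (act p τ)))
          ≤ ∑ τ ∈ B, ∑ p : α,
            θ * K * (Real.exp (θ * f p) + Real.exp (θ * f (act p τ))) := by
            exact Finset.sum_le_sum fun τ hτ =>
              Finset.sum_le_sum fun p _ => hbound τ hτ p
        _ = ∑ τ ∈ B, (θ * K * (2 * m θ)) := by
            refine Finset.sum_congr rfl fun τ hτ => ?_
            rw [← Finset.mul_sum, Finset.sum_add_distrib,
              hre τ hτ (fun q => Real.exp (θ * f q))]
            rw [hm]; ring
        _ = θ * K * (2 * (B.card : ℝ) * m θ) := by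
            rw [Finset.sum_const, nsmul_eq_mul]; ring
    have := h2T
    rw [hT1] at this
    nlinarith [hcard]
  -- step 2 : mgf bound
  have hmderiv : ∀ θ : ℝ, HasDerivAt m (∑ p : α, f p * Real.exp (θ * f p)) θ := by
    intro θ
    have : ∀ p : α, HasDerivAt (fun x : ℝ => Real.exp (x * f p))
        (f p * Real.exp (θ * f p)) θ := by
      intro p
      have h1 : HasDerivAt (fun x : ℝ => x * f p) (f p) θ := hasDerivAt_mul_const (f p)
      have := h1.exp
      simpa [mul_comm] using this
    simpa using HasDerivAt.fun_sum (fun p _ => this p)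
  set N : ℝ := (Fintype.card α : ℝ) with hN
  have hNpos : (0:ℝ) < N := by
    rw [hN]; exact_mod_cast Fintype.card_pos
  have step2 : ∀ θ : ℝ, 0 ≤ θ → m θ ≤ N * Real.exp (K * θ ^ 2 / 2) := by
    intro θ hθ
    set g : ℝ → ℝ := fun x => m x * Real.exp (-(K * x ^ 2 / 2)) with hg
    have hgderiv : ∀ x : ℝ, HasDerivAt g
        (((∑ p : α, f p * Real.exp (x * f p)) - K * x * m x) * Real.exp (-(K * x ^ 2 / 2))) x := by
      intro x
      have h1 : HasDerivAt (fun y : ℝ => -(K * y ^ 2 / 2)) (-(K * x)) x := by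
        have : HasDerivAt (fun y : ℝ => y ^ 2) (2 * x) x := by
          simpa using hasDerivAt_pow 2 x
        have := ((this.const_mul K).div_const 2).fun_neg
        exact this.congr_deriv (by ring)
      have h2 := h1.exp
      have := (hmderiv x).fun_mul h2
      exact this.congr_deriv (by ring)
    have hanti2 : AntitoneOn g (Set.Ici (0:ℝ)) := by
      refine antitoneOn_of_deriv_nonpos (convex_Ici 0) ?_ ?_ ?_
      · exact Continuous.continuousOn (by
          exact (continuous_finset_sum _ fun p _ =>
            (continuous_id.mul continuous_const).rexp).mul
            ((((continuous_const.mul (continuous_pow 2)).div_const 2).neg).rexp))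
      · intro x hx
        exact (hgderiv x).differentiableAt.differentiableWithinAt
      · intro x hx
        rw [(hgderiv x).deriv]
        have hx0 : (0:ℝ) ≤ x := le_of_lt (by simpa using hx)
        have := step1 x hx0
        have hexp : (0:ℝ) < Real.exp (-(K * x ^ 2 / 2)) := Real.exp_pos _
        nlinarith
    have hg0 : g 0 = m 0 := by simp [hg]
    have hm0 : m 0 = N := by simp [hm, hN]
    have := hanti2 (Set.self_mem_Ici) (Set.mem_Ici.2 hθ) hθ
    rw [hg0, hm0] at this
    have hgx : g θ = m θ * Real.exp (-(K * θ ^ 2 / 2)) := rfl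
    rw [hgx] at this
    have hexp : (0:ℝ) < Real.exp (-(K * θ ^ 2 / 2)) := Real.exp_pos _
    calc m θ = (m θ * Real.exp (-(K * θ ^ 2 / 2))) * Real.exp (K * θ ^ 2 / 2) := by
          rw [mul_assoc, ← Real.exp_add]; simp
      _ ≤ N * Real.exp (K * θ ^ 2 / 2) :=
          mul_le_mul_of_nonneg_right this (le_of_lt (Real.exp_pos _))
  -- step 3 : Chernoff
  set θ := t / K with hθdef
  have hθ0 : 0 ≤ θ := le_of_lt (div_pos ht hK)
  have hcher : ((univ.filter fun p : α => t ≤ f p).card : ℝ) * Real.exp (θ * t) ≤ m θ := by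
    calc ((univ.filter fun p : α => t ≤ f p).card : ℝ) * Real.exp (θ * t)
        = ∑ _p ∈ univ.filter fun p : α => t ≤ f p, Real.exp (θ * t) := by
          rw [Finset.sum_const, nsmul_eq_mul]
      _ ≤ ∑ p ∈ univ.filter fun p : α => t ≤ f p, Real.exp (θ * f p) := by
          refine Finset.sum_le_sum fun p hp => ?_
          have := (Finset.mem_filter.1 hp).2
          exact Real.exp_le_exp.2 (mul_le_mul_of_nonneg_left this hθ0)
      _ ≤ m θ := by
          rw [hm]
          exact Finset.sum_le_sum_of_subset_of_nonneg (Finset.filter_subset _ _)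
            (fun p _ _ => le_of_lt (Real.exp_pos _))
  have hfinal : ((univ.filter fun p : α => t ≤ f p).card : ℝ) ≤
      N * Real.exp (-(t ^ 2 / (2 * K))) := by
    have h1 : ((univ.filter fun p : α => t ≤ f p).card : ℝ) * Real.exp (θ * t) ≤
        N * Real.exp (K * θ ^ 2 / 2) := le_trans hcher (step2 θ hθ0)
    have hexp : (0:ℝ) < Real.exp (θ * t) := Real.exp_pos _
    have h2 : ((univ.filter fun p : α => t ≤ f p).card : ℝ) ≤
        N * Real.exp (K * θ ^ 2 / 2) / Real.exp (θ * t) := by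
      rw [le_div_iff₀ hexp]; exact h1
    have h3 : N * Real.exp (K * θ ^ 2 / 2) / Real.exp (θ * t) =
        N * Real.exp (K * θ ^ 2 / 2 - θ * t) := by
      rw [Real.exp_sub]; ring
    have h4 : K * θ ^ 2 / 2 - θ * t = -(t ^ 2 / (2 * K)) := by
      rw [hθdef]; field_simp; ring
    rw [h3, h4] at h2
    exact h2
  rw [div_le_iff₀ hNpos]
  calc ((univ.filter fun p : α => t ≤ f p).card : ℝ)
      ≤ N * Real.exp (-(t ^ 2 / (2 * K))) := hfinal
    _ = Real.exp (-(t ^ 2 / (2 * K))) * N := by ring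

variable {n : ℕ}

lemma sum_split_one (s : Fin n) (f : Fin n → ℝ) :
    ∑ j, f j = f s + ∑ j ∈ univ \ {s}, f j := by
  rw [← Finset.erase_eq, ← Finset.add_sum_erase _ f (mem_univ s)]

lemma diff_pair_eq (s t : Fin n) :
    (univ \ {s, t} : Finset (Fin n)) = (univ \ {s}).erase t := by
  ext x
  simp [and_comm]

lemma sum_split_two (s t : Fin n) (hst : s ≠ t) (f : Fin n → ℝ) :
    ∑ j, f j = f s + f t + ∑ j ∈ univ \ {s, t}, f j := by
  rw [sum_split_one s f, diff_pair_eq]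
  have ht' : t ∈ univ \ {s} := by simp [hst.symm]
  rw [← Finset.add_sum_erase _ f ht']
  ring

lemma sum_diff_split (s t : Fin n) (hst : s ≠ t) (f : Fin n → ℝ) :
    ∑ j ∈ univ \ {s}, f j = f t + ∑ j ∈ univ \ {s, t}, f j := by
  rw [diff_pair_eq]
  have ht' : t ∈ univ \ {s} := by simp [hst.symm]
  rw [← Finset.add_sum_erase _ f ht']

lemma off_nested (f : Fin n → Fin n → ℝ) :
    ∑ x ∈ univ.offDiag, f x.1 x.2 = ∑ s, ∑ t ∈ univ \ {s}, f s t := by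
  rw [show (univ : Finset (Fin n)).offDiag = (univ ×ˢ univ).filter (fun a => a.1 ≠ a.2) from by ext; simp,
    Finset.sum_filter, Finset.sum_product]
  refine Finset.sum_congr rfl fun s _ => ?_
  have : (univ \ {s} : Finset (Fin n)) = univ.filter (fun t => ¬ (s = t)) := by
    ext x; simp [eq_comm]
  rw [this, Finset.sum_filter]

lemma off_swap (f : Fin n → Fin n → ℝ) :
    ∑ x ∈ univ.offDiag, f x.1 x.2 = ∑ x ∈ univ.offDiag, f x.2 x.1 := by
  refine Finset.sum_equiv (Equiv.prodComm _ _) ?_ ?_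
  · intro x; simp [Finset.mem_offDiag, ne_comm]
  · intro x _; rfl

lemma card_diff_one (s : Fin n) : ((univ \ {s} : Finset (Fin n)).card : ℝ) = (n : ℝ) - 1 := by
  rw [Finset.card_univ_diff]
  simp
  rw [Nat.cast_sub (by have := Fintype.card_pos_iff.2 ⟨s⟩; simp at this ⊢; omega)]
  simp

lemma card_diff_two (s t : Fin n) (hst : s ≠ t) :
    ((univ \ {s, t} : Finset (Fin n)).card : ℝ) = (n : ℝ) - 2 := by
  rw [Finset.card_univ_diff]
  have hc : ({s, t} : Finset (Fin n)).card = 2 := by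
    rw [Finset.card_insert_of_notMem (by simpa using hst), Finset.card_singleton]
  rw [hc]
  have h2 : 2 ≤ n := by
    have := Finset.card_le_univ ({s, t} : Finset (Fin n))
    rw [hc] at this; simpa using this
  rw [Nat.cast_sub (by simpa using h2)]
  simp

lemma card_diff_three (s t u : Fin n) (hst : s ≠ t) (hsu : s ≠ u) (htu : t ≠ u) :
    ((univ \ {s, t, u} : Finset (Fin n)).card : ℝ) = (n : ℝ) - 3 := by
  rw [Finset.card_univ_diff]
  have hc : ({s, t, u} : Finset (Fin n)).card = 3 := by
    rw [Finset.card_insert_of_notMem (by simp [hst, hsu]),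
      Finset.card_insert_of_notMem (by simpa using htu), Finset.card_singleton]
  rw [hc]
  have h3 : 3 ≤ n := by
    have := Finset.card_le_univ ({s, t, u} : Finset (Fin n))
    rw [hc] at this; simpa using this
  rw [Nat.cast_sub (by simpa using h3)]
  simp

lemma sum_diff2_split (s t u : Fin n) (hsu : s ≠ u) (htu : t ≠ u) (hst : s ≠ t)
    (f : Fin n → ℝ) :
    ∑ j ∈ univ \ {s, t}, f j = f u + ∑ j ∈ univ \ {s, t, u}, f j := by
  have h1 : (univ \ {s, t, u} : Finset (Fin n)) = (univ \ {s, t}).erase u := by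
    ext x
    simp only [Finset.mem_erase, Finset.mem_sdiff, Finset.mem_insert,
      Finset.mem_singleton, Finset.mem_univ, true_and]
    tauto
  have hu : u ∈ univ \ {s, t} := by
    simp [Ne.symm hsu, Ne.symm htu]
  rw [h1, ← Finset.add_sum_erase _ f hu]

lemma swap_sum1 (c : Fin n) (h : Fin n → ℝ) :
    ∑ x ∈ univ.offDiag, h (Equiv.swap x.1 x.2 c)
      = ((n:ℝ) - 1) * ((n:ℝ) - 2) * h c + 2 * ∑ u ∈ univ \ {c}, h u := by
  rw [off_nested (fun i j => h (Equiv.swap i j c))]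
  rw [sum_split_one c (fun i => ∑ t ∈ univ \ {i}, h (Equiv.swap i t c))]
  have hGc : ∑ t ∈ univ \ {c}, h (Equiv.swap c t c) = ∑ u ∈ univ \ {c}, h u := by
    refine Finset.sum_congr rfl fun j hj => ?_
    rw [Equiv.swap_apply_left]
  have hGi : ∀ i ∈ univ \ {c}, ∑ t ∈ univ \ {i}, h (Equiv.swap i t c)
      = h i + ((n:ℝ) - 2) * h c := by
    intro i hi
    have hic : i ≠ c := by simpa using (Finset.mem_sdiff.1 hi).2
    rw [sum_diff_split i c hic (fun t => h (Equiv.swap i t c))]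
    rw [Equiv.swap_apply_right]
    congr 1
    have : ∀ j ∈ univ \ {i, c}, h (Equiv.swap i j c) = h c := by
      intro j hj
      simp only [Finset.mem_sdiff, Finset.mem_insert, Finset.mem_singleton] at hj
      push_neg at hj
      rw [Equiv.swap_apply_of_ne_of_ne hic.symm (Ne.symm hj.2.2)]
    rw [Finset.sum_congr rfl this, Finset.sum_const, nsmul_eq_mul, card_diff_two i c hic]
  rw [hGc, Finset.sum_congr rfl hGi, Finset.sum_add_distrib, Finset.sum_const,
    nsmul_eq_mul, card_diff_one c]
  ring

lemma swap_sum2 (s t : Fin n) (hst : s ≠ t) (h : Fin n → Fin n → ℝ) :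
    ∑ x ∈ univ.offDiag, h (Equiv.swap x.1 x.2 s) (Equiv.swap x.1 x.2 t)
      = ((n:ℝ) - 2) * ((n:ℝ) - 3) * h s t + 2 * h t s
        + 2 * ∑ u ∈ univ \ {s, t}, h u t + 2 * ∑ u ∈ univ \ {s, t}, h s u := by
  rw [off_nested (fun i j => h (Equiv.swap i j s) (Equiv.swap i j t))]
  rw [sum_split_two s t hst (fun i => ∑ j ∈ univ \ {i}, h (Equiv.swap i j s) (Equiv.swap i j t))]
  have hGs : ∑ j ∈ univ \ {s}, h (Equiv.swap s j s) (Equiv.swap s j t)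
      = h t s + ∑ u ∈ univ \ {s, t}, h u t := by
    rw [sum_diff_split s t hst (fun j => h (Equiv.swap s j s) (Equiv.swap s j t))]
    rw [Equiv.swap_apply_left, Equiv.swap_apply_right]
    congr 1
    refine Finset.sum_congr rfl fun j hj => ?_
    simp only [Finset.mem_sdiff, Finset.mem_insert, Finset.mem_singleton] at hj
    push_neg at hj
    rw [Equiv.swap_apply_left, Equiv.swap_apply_of_ne_of_ne hst.symm (Ne.symm hj.2.2)]
  have hGt : ∑ j ∈ univ \ {t}, h (Equiv.swap t j s) (Equiv.swap t j t)
      = h t s + ∑ u ∈ univ \ {s, t}, h s u := by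
    rw [sum_diff_split t s hst.symm (fun j => h (Equiv.swap t j s) (Equiv.swap t j t))]
    rw [Equiv.swap_apply_left, Equiv.swap_apply_right]
    have hpair : (univ \ {t, s} : Finset (Fin n)) = univ \ {s, t} := by
      rw [Finset.pair_comm]
    rw [hpair]
    congr 1
    refine Finset.sum_congr rfl fun j hj => ?_
    simp only [Finset.mem_sdiff, Finset.mem_insert, Finset.mem_singleton] at hj
    push_neg at hj
    rw [Equiv.swap_apply_left, Equiv.swap_apply_of_ne_of_ne hst (Ne.symm hj.2.1)]
  have hGi : ∀ i ∈ univ \ {s, t}, ∑ j ∈ univ \ {i}, h (Equiv.swap i j s) (Equiv.swap i j t)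
      = h i t + h s i + ((n:ℝ) - 3) * h s t := by
    intro i hi
    simp only [Finset.mem_sdiff, Finset.mem_insert, Finset.mem_singleton] at hi
    push_neg at hi
    obtain ⟨-, his, hit⟩ := hi
    rw [sum_diff_split i s his (fun j => h (Equiv.swap i j s) (Equiv.swap i j t))]
    rw [sum_diff2_split i s t hit hst his (fun j => h (Equiv.swap i j s) (Equiv.swap i j t))]
    rw [Equiv.swap_apply_right, Equiv.swap_apply_of_ne_of_ne hit.symm hst.symm,
      Equiv.swap_apply_of_ne_of_ne his.symm hst, Equiv.swap_apply_right]
    have hconst : ∀ j ∈ univ \ {i, s, t}, h (Equiv.swap i j s) (Equiv.swap i j t) = h s t := by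
      intro j hj
      simp only [Finset.mem_sdiff, Finset.mem_insert, Finset.mem_singleton] at hj
      push_neg at hj
      rw [Equiv.swap_apply_of_ne_of_ne his.symm (Ne.symm hj.2.2.1),
        Equiv.swap_apply_of_ne_of_ne hit.symm (Ne.symm hj.2.2.2)]
    rw [Finset.sum_congr rfl hconst, Finset.sum_const, nsmul_eq_mul,
      card_diff_three i s t his hit hst]
    ring
  rw [hGs, hGt, Finset.sum_congr rfl hGi, Finset.sum_add_distrib, Finset.sum_add_distrib,
    Finset.sum_const, nsmul_eq_mul, card_diff_two s t hst]
  ring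

section Ident
variable (a : Fin n → Fin n → Fin n → Fin n → ℝ)

/-- the basic quadratic statistic -/
noncomputable def Vst (p : Equiv.Perm (Fin n)) : ℝ :=
  ∑ s, ∑ t ∈ univ \ {s}, a s t (p s) (p t)

/-- the auxiliary linear statistic -/
noncomputable def Ust (p : Equiv.Perm (Fin n)) : ℝ :=
  ∑ s, ∑ t ∈ univ \ {s}, ∑ k, a s t k (p t)

variable (hzero : ∀ i j k l, i = j ∨ k = l → a i j k l = 0)
variable (hsymm : ∀ i j k l, a i j k l = a i j l k ∧ a i j k l = a j i l k)

include hzero hsymm in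
lemma identA (p : Equiv.Perm (Fin n)) :
    ∑ x ∈ univ.offDiag, Vst a ((Equiv.swap x.1 x.2).trans p)
      = ((n:ℝ) - 1) * ((n:ℝ) - 4) * Vst a p + 4 * Ust a p := by
  have hstep : ∀ x : Fin n × Fin n, Vst a ((Equiv.swap x.1 x.2).trans p)
      = ∑ s, ∑ t ∈ univ \ {s}, a s t (p (Equiv.swap x.1 x.2 s)) (p (Equiv.swap x.1 x.2 t)) := by
    intro x; rfl
  rw [Finset.sum_congr rfl fun x _ => hstep x]
  rw [Finset.sum_comm]
  have hinner : ∀ s : Fin n,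
      ∑ x ∈ univ.offDiag, ∑ t ∈ univ \ {s}, a s t (p (Equiv.swap x.1 x.2 s)) (p (Equiv.swap x.1 x.2 t))
      = ∑ t ∈ univ \ {s}, ∑ x ∈ univ.offDiag, a s t (p (Equiv.swap x.1 x.2 s)) (p (Equiv.swap x.1 x.2 t)) :=
    fun s => Finset.sum_comm
  rw [Finset.sum_congr rfl fun s _ => hinner s]
  -- now apply swap_sum2 pointwise
  have hpt : ∀ s : Fin n, ∀ t ∈ univ \ {s},
      ∑ x ∈ univ.offDiag, a s t (p (Equiv.swap x.1 x.2 s)) (p (Equiv.swap x.1 x.2 t))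
        = ((n:ℝ) - 1) * ((n:ℝ) - 4) * a s t (p s) (p t)
          + 2 * (∑ k, a s t k (p t)) + 2 * (∑ k, a s t (p s) k) := by
    intro s t hts
    have hst : s ≠ t := by
      intro h; subst h; simp at hts
    rw [swap_sum2 s t hst (fun u v => a s t (p u) (p v))]
    have e1 : a s t (p t) (p s) = a s t (p s) (p t) := (hsymm s t (p s) (p t)).1.symm
    have e2 : ∑ u ∈ univ \ {s, t}, a s t (p u) (p t)
        = (∑ k, a s t k (p t)) - a s t (p s) (p t) := by
      have h0 : ∑ u, a s t (p u) (p t) = ∑ k, a s t k (p t) :=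
        Equiv.sum_comp p (fun k => a s t k (p t))
      have h1 := sum_split_two s t hst (fun u => a s t (p u) (p t))
      have h2 : a s t (p t) (p t) = 0 := hzero _ _ _ _ (Or.inr rfl)
      rw [h0, h2] at h1
      linarith
    have e3 : ∑ u ∈ univ \ {s, t}, a s t (p s) (p u)
        = (∑ k, a s t (p s) k) - a s t (p s) (p t) := by
      have h0 : ∑ u, a s t (p s) (p u) = ∑ k, a s t (p s) k :=
        Equiv.sum_comp p (fun k => a s t (p s) k)
      have h1 := sum_split_two s t hst (fun u => a s t (p s) (p u))
      have h2 : a s t (p s) (p s) = 0 := hzero _ _ _ _ (Or.inr rfl)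
      rw [h0, h2] at h1
      linarith
    rw [e1, e2, e3]
    ring
  rw [Finset.sum_congr rfl fun s _ => Finset.sum_congr rfl (hpt s)]
  -- split the three pieces
  have hsplit : ∀ s : Fin n, ∑ t ∈ univ \ {s},
      (((n:ℝ) - 1) * ((n:ℝ) - 4) * a s t (p s) (p t)
        + 2 * (∑ k, a s t k (p t)) + 2 * (∑ k, a s t (p s) k))
      = ((n:ℝ) - 1) * ((n:ℝ) - 4) * (∑ t ∈ univ \ {s}, a s t (p s) (p t))
        + 2 * (∑ t ∈ univ \ {s}, ∑ k, a s t k (p t))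
        + 2 * (∑ t ∈ univ \ {s}, ∑ k, a s t (p s) k) := by
    intro s
    rw [Finset.sum_add_distrib, Finset.sum_add_distrib, Finset.mul_sum, Finset.mul_sum,
      Finset.mul_sum]
  rw [Finset.sum_congr rfl fun s _ => hsplit s]
  rw [Finset.sum_add_distrib, Finset.sum_add_distrib, ← Finset.mul_sum, ← Finset.mul_sum,
    ← Finset.mul_sum]
  have hU2 : ∑ s, ∑ t ∈ univ \ {s}, ∑ k, a s t (p s) k = Ust a p := by
    have h1 : ∀ s : Fin n, ∀ t ∈ univ \ {s}, ∑ k, a s t (p s) k = ∑ k, a t s k (p s) := by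
      intro s t _
      exact Finset.sum_congr rfl fun k _ => (hsymm s t (p s) k).2
    rw [Finset.sum_congr rfl fun s _ => Finset.sum_congr rfl (h1 s)]
    rw [← off_nested (fun s t => ∑ k, a t s k (p s)),
      off_swap (fun s t => ∑ k, a t s k (p s)),
      off_nested (fun x y => ∑ k, a x y k (p y))]
    rfl
  rw [hU2]
  rw [show ∑ s, ∑ t ∈ univ \ {s}, a s t (p s) (p t) = Vst a p from rfl,
    show ∑ s, ∑ t ∈ univ \ {s}, ∑ k, a s t k (p t) = Ust a p from rfl]
  ring

include hzero in
lemma identB (hsum : ∑ i, ∑ j, ∑ k, ∑ l, a i j k l = 0) (p : Equiv.Perm (Fin n)) :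
    ∑ x ∈ univ.offDiag, Ust a ((Equiv.swap x.1 x.2).trans p)
      = ((n:ℝ) ^ 2 - 3 * (n:ℝ)) * Ust a p := by
  have hstep : ∀ x : Fin n × Fin n, Ust a ((Equiv.swap x.1 x.2).trans p)
      = ∑ s, ∑ t ∈ univ \ {s}, ∑ k, a s t k (p (Equiv.swap x.1 x.2 t)) := by
    intro x; rfl
  rw [Finset.sum_congr rfl fun x _ => hstep x]
  rw [Finset.sum_comm]
  have hinner : ∀ s : Fin n,
      ∑ x ∈ univ.offDiag, ∑ t ∈ univ \ {s}, ∑ k, a s t k (p (Equiv.swap x.1 x.2 t))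
      = ∑ t ∈ univ \ {s}, ∑ x ∈ univ.offDiag, ∑ k, a s t k (p (Equiv.swap x.1 x.2 t)) :=
    fun s => Finset.sum_comm
  rw [Finset.sum_congr rfl fun s _ => hinner s]
  have hpt : ∀ s : Fin n, ∀ t ∈ univ \ {s},
      ∑ x ∈ univ.offDiag, ∑ k, a s t k (p (Equiv.swap x.1 x.2 t))
        = ((n:ℝ) ^ 2 - 3 * (n:ℝ)) * (∑ k, a s t k (p t))
          + 2 * (∑ k, ∑ m, a s t k m) := by
    intro s t _
    rw [swap_sum1 t (fun v => ∑ k, a s t k (p v))]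
    have h0 : ∑ u, ∑ k, a s t k (p u) = ∑ m, ∑ k, a s t k m :=
      Equiv.sum_comp p (fun m => ∑ k, a s t k m)
    have h1 := sum_split_one t (fun u => ∑ k, a s t k (p u))
    rw [h0] at h1
    have h2 : ∑ u ∈ univ \ {t}, ∑ k, a s t k (p u)
        = (∑ m, ∑ k, a s t k m) - (∑ k, a s t k (p t)) := by linarith
    rw [h2, Finset.sum_comm]
    ring
  rw [Finset.sum_congr rfl fun s _ => Finset.sum_congr rfl (hpt s)]
  have hsplit : ∀ s : Fin n, ∑ t ∈ univ \ {s},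
      (((n:ℝ) ^ 2 - 3 * (n:ℝ)) * (∑ k, a s t k (p t)) + 2 * (∑ k, ∑ m, a s t k m))
      = ((n:ℝ) ^ 2 - 3 * (n:ℝ)) * (∑ t ∈ univ \ {s}, ∑ k, a s t k (p t))
        + 2 * (∑ t ∈ univ \ {s}, ∑ k, ∑ m, a s t k m) := by
    intro s
    rw [Finset.sum_add_distrib, Finset.mul_sum, Finset.mul_sum]
  rw [Finset.sum_congr rfl fun s _ => hsplit s]
  rw [Finset.sum_add_distrib, ← Finset.mul_sum, ← Finset.mul_sum]
  have hG : ∑ s, ∑ t ∈ univ \ {s}, ∑ k, ∑ m, a s t k m = 0 := by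
    have hdiag : ∀ s : Fin n, ∑ t, ∑ k, ∑ m, a s t k m
        = (∑ k, ∑ m, a s s k m) + ∑ t ∈ univ \ {s}, ∑ k, ∑ m, a s t k m :=
      fun s => sum_split_one s (fun t => ∑ k, ∑ m, a s t k m)
    have hzz : ∀ s : Fin n, ∑ k, ∑ m, a s s k m = 0 := by
      intro s
      refine Finset.sum_eq_zero fun k _ => Finset.sum_eq_zero fun m _ => ?_
      exact hzero _ _ _ _ (Or.inl rfl)
    have : ∑ s, ∑ t, ∑ k, ∑ m, (a s t k m) = 0 := hsum
    calc ∑ s, ∑ t ∈ univ \ {s}, ∑ k, ∑ m, a s t k m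
        = ∑ s, (∑ t, ∑ k, ∑ m, a s t k m) := by
          refine Finset.sum_congr rfl fun s _ => ?_
          rw [hdiag s, hzz s, zero_add]
      _ = 0 := hsum
  rw [hG]
  rw [show ∑ s, ∑ t ∈ univ \ {s}, ∑ k, a s t k (p t) = Ust a p from rfl]
  ring

lemma boundV (b : ℝ) (hb : ∀ i j k l, |a i j k l| ≤ b) (hb0 : 0 ≤ b)
    (p : Equiv.Perm (Fin n)) (i j : Fin n) :
    |Vst a p - Vst a ((Equiv.swap i j).trans p)| ≤ 8 * (n:ℝ) * b := by
  have hdiff : Vst a p - Vst a ((Equiv.swap i j).trans p)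
      = ∑ x ∈ univ.offDiag,
          (a x.1 x.2 (p x.1) (p x.2) - a x.1 x.2 (p (Equiv.swap i j x.1)) (p (Equiv.swap i j x.2))) := by
    rw [Finset.sum_sub_distrib]
    congr 1
    · exact (off_nested (fun s t => a s t (p s) (p t))).symm
    · exact (off_nested (fun s t => a s t (p (Equiv.swap i j s)) (p (Equiv.swap i j t)))).symm
  set d : Fin n × Fin n → ℝ := fun x =>
    a x.1 x.2 (p x.1) (p x.2) - a x.1 x.2 (p (Equiv.swap i j x.1)) (p (Equiv.swap i j x.2)) with hd
  set E : Finset (Fin n × Fin n) :=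
    univ.offDiag.filter (fun x => x.1 = i ∨ x.1 = j ∨ x.2 = i ∨ x.2 = j) with hE
  have hfE : ∑ x ∈ univ.offDiag, d x = ∑ x ∈ E, d x := by
    rw [hE]
    refine (Finset.sum_filter_of_ne ?_).symm
    intro x _ hne
    by_contra hP
    push_neg at hP
    obtain ⟨h1, h2, h3, h4⟩ := hP
    apply hne
    rw [hd]
    simp only
    rw [Equiv.swap_apply_of_ne_of_ne h1 h2, Equiv.swap_apply_of_ne_of_ne h3 h4, sub_self]
  have hcardE : (E.card : ℝ) ≤ 4 * n := by
    have hsub : E ⊆ ({i, j} ×ˢ univ) ∪ (univ ×ˢ {i, j}) := by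
      intro x hx
      rw [hE, Finset.mem_filter] at hx
      rcases hx.2 with h | h | h | h <;>
        simp [Finset.mem_union, Finset.mem_product, h]
    have h1 := Finset.card_le_card hsub
    have h2 := Finset.card_union_le (({i, j} : Finset (Fin n)) ×ˢ univ) (univ ×ˢ ({i, j} : Finset (Fin n)))
    have hij2 : ({i, j} : Finset (Fin n)).card ≤ 2 :=
      (Finset.card_insert_le _ _).trans (by simp)
    have huc : (univ : Finset (Fin n)).card = n := by simp
    have h3 : (({i, j} : Finset (Fin n)) ×ˢ (univ : Finset (Fin n))).card ≤ 2 * n := by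
      rw [Finset.card_product, huc]
      exact Nat.mul_le_mul_right n hij2
    have h4 : ((univ : Finset (Fin n)) ×ˢ ({i, j} : Finset (Fin n))).card ≤ n * 2 := by
      rw [Finset.card_product, huc]
      exact Nat.mul_le_mul_left n hij2
    have h5 : E.card ≤ 4 * n := by omega
    exact_mod_cast h5
  rw [hdiff, hfE]
  calc |∑ x ∈ E, d x| ≤ ∑ x ∈ E, |d x| := Finset.abs_sum_le_sum_abs _ _
    _ ≤ ∑ _x ∈ E, 2 * b := by
        refine Finset.sum_le_sum fun x _ => ?_
        rw [hd]
        calc |a x.1 x.2 (p x.1) (p x.2) - a x.1 x.2 (p (Equiv.swap i j x.1)) (p (Equiv.swap i j x.2))|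
            ≤ |a x.1 x.2 (p x.1) (p x.2)| + |a x.1 x.2 (p (Equiv.swap i j x.1)) (p (Equiv.swap i j x.2))| :=
              abs_sub _ _
          _ ≤ 2 * b := by
              have := hb x.1 x.2 (p x.1) (p x.2)
              have := hb x.1 x.2 (p (Equiv.swap i j x.1)) (p (Equiv.swap i j x.2))
              linarith
    _ = (E.card : ℝ) * (2 * b) := by rw [Finset.sum_const, nsmul_eq_mul]
    _ ≤ 4 * n * (2 * b) := by
        apply mul_le_mul_of_nonneg_right hcardE
        positivity
    _ = 8 * (n:ℝ) * b := by ring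

lemma boundU (b : ℝ) (hb : ∀ i j k l, |a i j k l| ≤ b) (hb0 : 0 ≤ b)
    (p : Equiv.Perm (Fin n)) (i j : Fin n) :
    |Ust a p - Ust a ((Equiv.swap i j).trans p)| ≤ 4 * (n:ℝ) ^ 2 * b := by
  have hdiff : Ust a p - Ust a ((Equiv.swap i j).trans p)
      = ∑ x ∈ univ.offDiag,
          ((∑ k, a x.1 x.2 k (p x.2)) - ∑ k, a x.1 x.2 k (p (Equiv.swap i j x.2))) := by
    rw [Finset.sum_sub_distrib]
    congr 1
    · exact (off_nested (fun s t => ∑ k, a s t k (p t))).symm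
    · exact (off_nested (fun s t => ∑ k, a s t k (p (Equiv.swap i j t)))).symm
  set d : Fin n × Fin n → ℝ := fun x =>
    (∑ k, a x.1 x.2 k (p x.2)) - ∑ k, a x.1 x.2 k (p (Equiv.swap i j x.2)) with hd
  set E : Finset (Fin n × Fin n) :=
    univ.offDiag.filter (fun x => x.2 = i ∨ x.2 = j) with hE
  have hfE : ∑ x ∈ univ.offDiag, d x = ∑ x ∈ E, d x := by
    rw [hE]
    refine (Finset.sum_filter_of_ne ?_).symm
    intro x _ hne
    by_contra hP
    push_neg at hP
    obtain ⟨h1, h2⟩ := hP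
    apply hne
    rw [hd]
    simp only
    rw [Equiv.swap_apply_of_ne_of_ne h1 h2, sub_self]
  have hcardE : (E.card : ℝ) ≤ 2 * n := by
    have hsub : E ⊆ (univ ×ˢ ({i, j} : Finset (Fin n))) := by
      intro x hx
      rw [hE, Finset.mem_filter] at hx
      rcases hx.2 with h | h <;> simp [Finset.mem_product, h]
    have h1 := Finset.card_le_card hsub
    have hij2 : ({i, j} : Finset (Fin n)).card ≤ 2 :=
      (Finset.card_insert_le _ _).trans (by simp)
    have huc : (univ : Finset (Fin n)).card = n := by simp
    have h4 : ((univ : Finset (Fin n)) ×ˢ ({i, j} : Finset (Fin n))).card ≤ n * 2 := by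
      rw [Finset.card_product, huc]
      exact Nat.mul_le_mul_left n hij2
    have h5 : E.card ≤ 2 * n := by omega
    exact_mod_cast h5
  rw [hdiff, hfE]
  calc |∑ x ∈ E, d x| ≤ ∑ x ∈ E, |d x| := Finset.abs_sum_le_sum_abs _ _
    _ ≤ ∑ _x ∈ E, 2 * (n:ℝ) * b := by
        refine Finset.sum_le_sum fun x _ => ?_
        rw [hd]
        simp only
        calc |(∑ k, a x.1 x.2 k (p x.2)) - ∑ k, a x.1 x.2 k (p (Equiv.swap i j x.2))|
            ≤ |∑ k, a x.1 x.2 k (p x.2)| + |∑ k, a x.1 x.2 k (p (Equiv.swap i j x.2))| := abs_sub _ _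
          _ ≤ (n:ℝ) * b + (n:ℝ) * b := by
              have e1 : |∑ k, a x.1 x.2 k (p x.2)| ≤ (n:ℝ) * b := by
                calc |∑ k, a x.1 x.2 k (p x.2)| ≤ ∑ k, |a x.1 x.2 k (p x.2)| :=
                      Finset.abs_sum_le_sum_abs _ _
                  _ ≤ ∑ _k : Fin n, b := Finset.sum_le_sum fun k _ => hb _ _ _ _
                  _ = (n:ℝ) * b := by rw [Finset.sum_const, nsmul_eq_mul]; simp
              have e2 : |∑ k, a x.1 x.2 k (p (Equiv.swap i j x.2))| ≤ (n:ℝ) * b := by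
                calc |∑ k, a x.1 x.2 k (p (Equiv.swap i j x.2))|
                    ≤ ∑ k, |a x.1 x.2 k (p (Equiv.swap i j x.2))| := Finset.abs_sum_le_sum_abs _ _
                  _ ≤ ∑ _k : Fin n, b := Finset.sum_le_sum fun k _ => hb _ _ _ _
                  _ = (n:ℝ) * b := by rw [Finset.sum_const, nsmul_eq_mul]; simp
              linarith
          _ = 2 * (n:ℝ) * b := by ring
    _ = (E.card : ℝ) * (2 * (n:ℝ) * b) := by rw [Finset.sum_const, nsmul_eq_mul]
    _ ≤ 2 * n * (2 * (n:ℝ) * b) := by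
        apply mul_le_mul_of_nonneg_right hcardE
        positivity
    _ = 4 * (n:ℝ) ^ 2 * b := by ring

end Ident

/-- Concentration of measure for doubly indexed permutation statistics:
for a bounded array `a` with the stated symmetries and zero total sum,
`W₁ = n^{-3/2} Σ_{s≠t} a_{s,t,π(s),π(t)}` (with `π` uniform on `S_n`) satisfies
`P(W₁ ≥ t), P(W₁ ≤ -t) ≤ exp(-t²/(2 φ_{b,n}))` with
`φ_{b,n} = 8(2n-1)b²(6 + 4/n + 1/n²)/n`. -/
theorem dips_concentration (n : ℕ) (hn : 1 ≤ n) (b : ℝ)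
    (a : Fin n → Fin n → Fin n → Fin n → ℝ)
    (hzero : ∀ i j k l, i = j ∨ k = l → a i j k l = 0)
    (hsum : ∑ i, ∑ j, ∑ k, ∑ l, a i j k l = 0)
    (hsymm : ∀ i j k l, a i j k l = a i j l k ∧ a i j k l = a j i l k)
    (hb : ∀ i j k l, |a i j k l| ≤ b)
    (W : Equiv.Perm (Fin n) → ℝ)
    (hW : ∀ p : Equiv.Perm (Fin n),
      W p = ((n : ℝ) * Real.sqrt n)⁻¹ * ∑ s, ∑ t ∈ univ \ {s}, a s t (p s) (p t))
    (t : ℝ) (ht : 0 < t) :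
    ((univ.filter (fun p : Equiv.Perm (Fin n) => t ≤ W p)).card : ℝ) /
        (Fintype.card (Equiv.Perm (Fin n)))
      ≤ Real.exp (-(t ^ 2 /
          (2 * (8 * (2 * (n : ℝ) - 1) * b ^ 2 * (6 + 4 / n + 1 / (n : ℝ) ^ 2) / n)))) ∧
    ((univ.filter (fun p : Equiv.Perm (Fin n) => W p ≤ -t)).card : ℝ) /
        (Fintype.card (Equiv.Perm (Fin n)))
      ≤ Real.exp (-(t ^ 2 /
          (2 * (8 * (2 * (n : ℝ) - 1) * b ^ 2 * (6 + 4 / n + 1 / (n : ℝ) ^ 2) / n)))) := by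
  by_cases hcase : 2 ≤ n ∧ 0 < b
  case neg =>
    -- degenerate case : the array vanishes identically
    have haz : ∀ i j k l, a i j k l = 0 := by
      intro i j k l
      rcases not_and_or.1 hcase with h | h
      · have hij : i = j := by
          apply Fin.ext
          omega
        exact hzero _ _ _ _ (Or.inl hij)
      · have hb0 : 0 ≤ b := (abs_nonneg _).trans (hb i j k l)
        have hble : b ≤ 0 := le_of_not_gt h
        have : |a i j k l| ≤ 0 := (hb i j k l).trans hble
        exact abs_eq_zero.1 (le_antisymm this (abs_nonneg _))
    have hW0 : ∀ p, W p = 0 := by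
      intro p
      rw [hW p]
      rw [Finset.sum_eq_zero fun s _ => Finset.sum_eq_zero fun u _ => haz _ _ _ _]
      ring
    constructor
    · have h1 : (univ.filter (fun p : Equiv.Perm (Fin n) => t ≤ W p)) = ∅ := by
        refine Finset.filter_eq_empty_iff.2 fun p _ => ?_
        rw [hW0 p]; linarith
      rw [h1]
      simp only [Finset.card_empty, Nat.cast_zero, zero_div]
      positivity
    · have h2 : (univ.filter (fun p : Equiv.Perm (Fin n) => W p ≤ -t)) = ∅ := by
        refine Finset.filter_eq_empty_iff.2 fun p _ => ?_
        rw [hW0 p]; linarith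
      rw [h2]
      simp only [Finset.card_empty, Nat.cast_zero, zero_div]
      positivity
  case pos =>
    obtain ⟨hn2, hbpos⟩ := hcase
    have hnR : (2:ℝ) ≤ (n:ℝ) := by exact_mod_cast hn2
    have hn0 : (0:ℝ) < n := by linarith
    set c : ℝ := ((n : ℝ) * Real.sqrt n)⁻¹ with hc
    have hsq : (0:ℝ) < Real.sqrt n := Real.sqrt_pos.2 hn0
    have hcpos : 0 < c := by rw [hc]; positivity
    have hc2 : c ^ 2 = ((n:ℝ) ^ 3)⁻¹ := by
      have h1 : ((n:ℝ) * Real.sqrt n) ^ 2 = (n:ℝ) ^ 3 := by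
        rw [mul_pow, Real.sq_sqrt hn0.le]; ring
      rw [hc, inv_pow, h1]
    set K : ℝ := 8 * (2 * (n : ℝ) - 1) * b ^ 2 * (6 + 4 / (n:ℝ) + 1 / (n : ℝ) ^ 2) / (n:ℝ)
      with hKdef
    have hK : 0 < K := by
      rw [hKdef]
      apply div_pos _ hn0
      apply mul_pos (mul_pos (mul_pos (by norm_num) (by linarith)) (by positivity))
      positivity
    have hKexpand : K = (8 * (2 * (n:ℝ) - 1) * b ^ 2 * (6 * (n:ℝ)^2 + 4 * n + 1)) / (n:ℝ)^3 := by
      rw [hKdef]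
      field_simp
    have hK32 : 32 * b ^ 2 ≤ K := by
      rw [hKexpand, le_div_iff₀ (by positivity)]
      nlinarith [sq_nonneg b, hnR, sq_nonneg ((n:ℝ) - 2), mul_pos hn0 hn0,
        mul_nonneg (sq_nonneg b) (mul_nonneg hn0.le hn0.le)]
    -- setup for the abstract lemma
    set act : Equiv.Perm (Fin n) → Fin n × Fin n → Equiv.Perm (Fin n) :=
      fun p x => (Equiv.swap x.1 x.2).trans p with hactdef
    have hact : ∀ p, ∀ x ∈ univ.offDiag, act (act p x) x = p := by
      intro p x _
      rw [hactdef]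
      ext z
      simp [Equiv.swap_apply_self]
    have hBne : (univ.offDiag : Finset (Fin n × Fin n)).Nonempty := by
      refine ⟨(⟨0, by omega⟩, ⟨1, by omega⟩), ?_⟩
      simp only [Finset.mem_offDiag, Finset.mem_univ, true_and, ne_eq]
      simp [Fin.ext_iff]
    set F : Equiv.Perm (Fin n) → Equiv.Perm (Fin n) → ℝ :=
      fun p q => ((n:ℝ)/4) * (W p - W q) + (c/2) * (Ust a p - Ust a q) with hFdef
    have hanti : ∀ p q, F q p = - F p q := by
      intro p q; rw [hFdef]; ring
    have hWV : ∀ r, W r = c * Vst a r := fun r => hW r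
    have hcard : ((univ.offDiag : Finset (Fin n × Fin n)).card : ℝ) = (n:ℝ)^2 - n := by
      rw [Finset.offDiag_card]
      have huc : (univ : Finset (Fin n)).card = n := by simp
      rw [huc]
      rw [Nat.cast_sub (Nat.le_mul_of_pos_left n (by omega))]
      push_cast
      ring
    have hF : ∀ p, ∑ x ∈ univ.offDiag, F p (act p x)
        = ((univ.offDiag : Finset (Fin n × Fin n)).card : ℝ) * W p := by
      intro p
      have hVsum := identA a hzero hsymm p
      have hUsum := identB a hzero hsum p
      have hexp : ∑ x ∈ univ.offDiag, F p (act p x)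
          = ((n:ℝ)/4) * (((univ.offDiag : Finset (Fin n × Fin n)).card : ℝ) * W p
              - c * (∑ x ∈ univ.offDiag, Vst a ((Equiv.swap x.1 x.2).trans p)))
            + (c/2) * (((univ.offDiag : Finset (Fin n × Fin n)).card : ℝ) * Ust a p
              - ∑ x ∈ univ.offDiag, Ust a ((Equiv.swap x.1 x.2).trans p)) := by
        rw [hFdef]
        simp only
        rw [Finset.sum_add_distrib, ← Finset.mul_sum, ← Finset.mul_sum,
          Finset.sum_sub_distrib, Finset.sum_sub_distrib, Finset.sum_const, nsmul_eq_mul]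
        have hWact : ∀ x ∈ univ.offDiag, W (act p x) = c * Vst a ((Equiv.swap x.1 x.2).trans p) := by
          intro x _
          rw [hactdef]
          exact hWV _
        have hUact : ∀ x ∈ univ.offDiag, Ust a (act p x) = Ust a ((Equiv.swap x.1 x.2).trans p) := by
          intro x _; rw [hactdef]
        rw [Finset.sum_congr rfl hWact, Finset.sum_congr rfl hUact, ← Finset.mul_sum]
        simp only [Finset.sum_const, nsmul_eq_mul]
      rw [hexp, hVsum, hUsum, hcard, hWV p]
      ring
    have hbd : ∀ p, ∀ x ∈ (univ.offDiag : Finset (Fin n × Fin n)),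
        |W p - W (act p x)| * |F p (act p x)| ≤ K := by
      intro p x _
      set q := act p x with hq
      have hWd : |W p - W q| ≤ c * (8 * n * b) := by
        rw [hWV p, hWV q, ← mul_sub, abs_mul, abs_of_pos hcpos]
        have := boundV a b hb hbpos.le p x.1 x.2
        have hqq : Vst a q = Vst a ((Equiv.swap x.1 x.2).trans p) := by rw [hq, hactdef]
        rw [hqq]
        exact mul_le_mul_of_nonneg_left this hcpos.le
      have hUd : |Ust a p - Ust a q| ≤ 4 * (n:ℝ)^2 * b := by
        have := boundU a b hb hbpos.le p x.1 x.2
        have hqq : Ust a q = Ust a ((Equiv.swap x.1 x.2).trans p) := by rw [hq, hactdef]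
        rw [hqq]
        exact this
      have hFd : |F p q| ≤ 4 * (n:ℝ)^2 * b * c := by
        rw [hFdef]
        simp only
        calc |(n:ℝ)/4 * (W p - W q) + c/2 * (Ust a p - Ust a q)|
            ≤ |(n:ℝ)/4 * (W p - W q)| + |c/2 * (Ust a p - Ust a q)| := abs_add_le _ _
          _ = ((n:ℝ)/4) * |W p - W q| + (c/2) * |Ust a p - Ust a q| := by
              rw [abs_mul, abs_mul, abs_of_nonneg (by positivity : (0:ℝ) ≤ (n:ℝ)/4),
                abs_of_nonneg (by positivity : (0:ℝ) ≤ c/2)]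
          _ ≤ ((n:ℝ)/4) * (c * (8 * n * b)) + (c/2) * (4 * (n:ℝ)^2 * b) := by
              refine add_le_add (mul_le_mul_of_nonneg_left hWd (by positivity))
                (mul_le_mul_of_nonneg_left hUd (by positivity))
          _ = 4 * (n:ℝ)^2 * b * c := by ring
      calc |W p - W q| * |F p q| ≤ (c * (8 * n * b)) * (4 * (n:ℝ)^2 * b * c) := by
            refine mul_le_mul hWd hFd (abs_nonneg _) (by positivity)
        _ = 32 * (n:ℝ)^3 * b^2 * c^2 := by ring
        _ = 32 * b^2 := by
            rw [hc2]
            field_simp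
        _ ≤ K := hK32
    constructor
    · exact conc_abstract univ.offDiag act hact W F hanti hF hBne K hK hbd t ht
    · have hres := conc_abstract univ.offDiag act hact (fun p => - W p)
        (fun p q => - F p q) (by intro p q; simp [hanti p q])
        (by intro p; simp only [Finset.sum_neg_distrib, hF p]; ring)
        hBne K hK
        (by
          intro p x hx
          have h := hbd p x hx
          have e1 : -W p - -W (act p x) = -(W p - W (act p x)) := by ring
          simp only [e1, abs_neg]
          exact h)
        t ht
      have hfilter : (univ.filter fun p : Equiv.Perm (Fin n) => t ≤ - W p)
          = (univ.filter fun p : Equiv.Perm (Fin n) => W p ≤ -t) := by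
        apply Finset.filter_congr
        intro p _
        simp [le_neg]
      rw [hfilter] at hres
      exact hres
end

section
/- Let x₁,…,x_{n₁} and y₁,…,y_{n₂} (n₁+n₂ = n) be i.i.d. samples from the same continuous distribution (so the rank permutation π is uniform on S_n). With a_{i,j,k,l} as in the MWW construction and W₁ = n^{−3/2} Σ_{s≠t} a_{s,t,π(s),π(t)}, for all t > 0: P(W₁ ≥ t), P(W₁ ≤ −t) ≤ exp(−t²n / (4(2n−1)(6 + 4/n + 1/n²))). -/
open Finset

open scoped Classical

lemma exp_le_add_exp_sq (x : ℝ) : Real.exp x ≤ x + Real.exp (x ^ 2) := by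
  rcases le_total 1 x with hx | hx
  · have h1 : x ≤ x ^ 2 := by nlinarith
    have := Real.exp_le_exp.mpr h1
    linarith
  rcases le_total x (-1) with hx' | hx'
  · have h1 : Real.exp x ≤ 1 := by
      rw [show (1:ℝ) = Real.exp 0 by simp]
      exact Real.exp_le_exp.mpr (by linarith)
    have h2 : 1 + x ^ 2 ≤ Real.exp (x ^ 2) := by
      linarith [Real.add_one_le_exp (x ^ 2)]
    nlinarith
  · -- |x| ≤ 1
    have habs : |x| ≤ 1 := abs_le.mpr ⟨hx', hx⟩
    have hb := Real.exp_bound habs (n := 3) (by norm_num)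
    have h1 : Real.exp x ≤ 1 + x + x ^ 2 / 2 + |x| ^ 3 * (4 / (6 * 3)) := by
      have := abs_le.mp hb
      have hs : ∑ m ∈ Finset.range 3, x ^ m / m.factorial = 1 + x + x ^ 2 / 2 := by
        norm_num [Finset.sum_range_succ, Nat.factorial]
      rw [hs] at this
      have h4 : ((Nat.factorial 3 : ℕ) : ℝ) = 6 := by norm_num [Nat.factorial]
      rw [h4] at this
      norm_num at this ⊢
      linarith [this.2]
    have h2 : |x| ^ 3 ≤ x ^ 2 := by
      have : |x| ^ 3 ≤ |x| ^ 2 := pow_le_pow_of_le_one (abs_nonneg x) habs (by norm_num)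
      calc |x| ^ 3 ≤ |x| ^ 2 := this
        _ = x ^ 2 := sq_abs x
    have h3 : 1 + x ^ 2 ≤ Real.exp (x ^ 2) := by linarith [Real.add_one_le_exp (x ^ 2)]
    nlinarith

lemma abs_sub_mean_le {α : Type*} [DecidableEq α] (val : α → ℝ) (R : ℝ) (F : Finset α)
    (hF : F.Nonempty) (hR : ∀ x ∈ F, ∀ y ∈ F, |val x - val y| ≤ R) :
    ∀ v ∈ F, |val v - (∑ x ∈ F, val x) / F.card| ≤ R := by
  intro v hv
  have hc : (0:ℝ) < F.card := by exact_mod_cast card_pos.mpr hF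
  have h1 : val v - (∑ x ∈ F, val x) / F.card
      = (∑ y ∈ F, (val v - val y)) / F.card := by
    rw [Finset.sum_sub_distrib, Finset.sum_const, nsmul_eq_mul]
    field_simp
  rw [h1, abs_div, abs_of_pos hc, div_le_iff₀ hc]
  calc |∑ y ∈ F, (val v - val y)| ≤ ∑ y ∈ F, |val v - val y| := Finset.abs_sum_le_sum_abs _ _
    _ ≤ ∑ y ∈ F, R := Finset.sum_le_sum fun y hy => hR v hv y hy
    _ = R * F.card := by rw [Finset.sum_const, nsmul_eq_mul]; ring

lemma mgf_bound {α : Type*} [DecidableEq α] (val : α → ℝ) (R l : ℝ)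
    (k : ℕ) (F : Finset α) (hk : k ≤ F.card)
    (hR : ∀ x ∈ F, ∀ y ∈ F, |val x - val y| ≤ R) :
    ∑ T ∈ F.powersetCard k,
        Real.exp (l * (∑ x ∈ T, val x - k * ((∑ x ∈ F, val x) / F.card)))
      ≤ (F.card.choose k : ℝ) * Real.exp (l ^ 2 * k * R ^ 2) := by
  induction k generalizing F with
  | zero => simp
  | succ k ih =>
    classical
    have hF : F.Nonempty := Finset.card_pos.mp (by omega)
    have hm0 : (0:ℝ) < F.card := by exact_mod_cast card_pos.mpr hF
    have hR0 : 0 ≤ R := by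
      obtain ⟨x, hx⟩ := hF
      have := hR x hx x hx; simpa using this
    set m : ℕ := F.card with hm
    set μ : ℝ := (∑ x ∈ F, val x) / m with hμ
    set μ' : α → ℝ := fun v => (∑ x ∈ F.erase v, val x) / ((F.erase v).card : ℝ) with hμ'
    set d : α → ℝ := fun v => val v + k * μ' v - (k + 1) * μ with hd
    -- facts about erase
    have hcard_erase : ∀ v ∈ F, ((F.erase v).card : ℝ) = (m : ℝ) - 1 := by
      intro v hv
      rw [Finset.card_erase_of_mem hv]
      have : 1 ≤ m := by omega
      rw [← hm]
      push_cast [Nat.cast_sub this]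
      ring
    have hsum_erase : ∀ v ∈ F, ∑ x ∈ F.erase v, val x = (∑ x ∈ F, val x) - val v := by
      intro v hv
      have := Finset.add_sum_erase F val hv
      linarith
    -- |d v| ≤ R
    have hdabs : ∀ v ∈ F, |d v| ≤ R := by
      intro v hv
      have hvm := abs_sub_mean_le val R F hF hR v hv
      rcases Nat.eq_zero_or_pos k with hk0 | hk1
      · subst hk0
        simp only [hd, Nat.cast_zero, zero_mul, add_zero, zero_add, one_mul]
        simpa [hμ] using hvm
      · have hm2 : 2 ≤ m := by omega
        have hm1 : ((m:ℝ) - 1) ≠ 0 := by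
          have : (2:ℝ) ≤ m := by exact_mod_cast hm2
          linarith
        have hid : d v = (((m:ℝ) - 1 - k) / ((m:ℝ) - 1)) * (val v - μ) := by
          simp only [hd, hμ', hμ]
          rw [hcard_erase v hv, hsum_erase v hv]
          field_simp
          ring
        rw [hid, abs_mul]
        have hc1 : |((m:ℝ) - 1 - k) / ((m:ℝ) - 1)| ≤ 1 := by
          rw [abs_div]
          rw [div_le_one (by positivity)]
          have h1 : (k:ℝ) + 1 ≤ m := by exact_mod_cast hk
          rw [abs_of_nonneg (by linarith), abs_of_nonneg (by linarith)]
          have : (0:ℝ) ≤ k := Nat.cast_nonneg k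
          linarith
        calc |((m:ℝ) - 1 - k) / ((m:ℝ) - 1)| * |val v - μ| ≤ 1 * R := by
              apply mul_le_mul hc1 hvm (abs_nonneg _) (by norm_num)
          _ = R := by ring
    -- ∑ d v = 0
    have hdsum : ∑ v ∈ F, d v = 0 := by
      rcases Nat.eq_zero_or_pos k with hk0 | hk1
      · subst hk0
        simp only [hd, Nat.cast_zero, zero_mul, add_zero, zero_add, one_mul]
        rw [Finset.sum_sub_distrib, Finset.sum_const, nsmul_eq_mul]
        simp only [hμ]
        field_simp
        rw [← hm]; ring
      · have hm2 : 2 ≤ m := by omega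
        have hm1 : ((m:ℝ) - 1) ≠ 0 := by
          have : (2:ℝ) ≤ m := by exact_mod_cast hm2
          linarith
        have hμ'sum : ∑ v ∈ F, μ' v = ∑ x ∈ F, val x := by
          have : ∀ v ∈ F, μ' v = ((∑ x ∈ F, val x) - val v) / ((m:ℝ) - 1) := by
            intro v hv
            simp only [hμ']
            rw [hcard_erase v hv, hsum_erase v hv]
          rw [Finset.sum_congr rfl this, ← Finset.sum_div, Finset.sum_sub_distrib,
            Finset.sum_const, nsmul_eq_mul]
          field_simp
          ring
        simp only [hd]
        rw [Finset.sum_sub_distrib, Finset.sum_add_distrib, ← Finset.mul_sum, hμ'sum,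
          Finset.sum_const, nsmul_eq_mul]
        simp only [hμ]
        field_simp
        ring
    -- bound on sum of exp (l * d v)
    have hexp_d : ∑ v ∈ F, Real.exp (l * d v) ≤ (m : ℝ) * Real.exp (l ^ 2 * R ^ 2) := by
      have hpt : ∀ v ∈ F, Real.exp (l * d v) ≤ l * d v + Real.exp (l ^ 2 * R ^ 2) := by
        intro v hv
        have h1 := exp_le_add_exp_sq (l * d v)
        have habs := abs_le.mp (hdabs v hv)
        have h2 : (l * d v) ^ 2 ≤ l ^ 2 * R ^ 2 := by
          have hdd : (d v) ^ 2 ≤ R ^ 2 := sq_le_sq' (by linarith [habs.1]) habs.2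
          calc (l * d v) ^ 2 = l ^ 2 * (d v) ^ 2 := by ring
            _ ≤ l ^ 2 * R ^ 2 := by
                apply mul_le_mul_of_nonneg_left hdd (sq_nonneg l)
        have h3 := Real.exp_le_exp.mpr h2
        linarith
      calc ∑ v ∈ F, Real.exp (l * d v)
          ≤ ∑ v ∈ F, (l * d v + Real.exp (l ^ 2 * R ^ 2)) := Finset.sum_le_sum hpt
        _ = l * (∑ v ∈ F, d v) + (m : ℝ) * Real.exp (l ^ 2 * R ^ 2) := by
            rw [Finset.sum_add_distrib, ← Finset.mul_sum, Finset.sum_const, nsmul_eq_mul]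
        _ = (m : ℝ) * Real.exp (l ^ 2 * R ^ 2) := by rw [hdsum]; ring
    -- the counting identity
    have hcount : ((k:ℝ) + 1) *
          ∑ T ∈ F.powersetCard (k+1), Real.exp (l * (∑ x ∈ T, val x - ((k:ℝ)+1) * μ))
        = ∑ v ∈ F, Real.exp (l * d v) *
            ∑ T' ∈ (F.erase v).powersetCard k,
              Real.exp (l * (∑ x ∈ T', val x - k * μ' v)) := by
      rw [Finset.mul_sum]
      calc ∑ T ∈ F.powersetCard (k+1), ((k:ℝ)+1) * Real.exp (l * (∑ x ∈ T, val x - ((k:ℝ)+1) * μ))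
          = ∑ T ∈ F.powersetCard (k+1), ∑ v ∈ F,
              (if v ∈ T then Real.exp (l * (∑ x ∈ T, val x - ((k:ℝ)+1) * μ)) else 0) := by
            apply Finset.sum_congr rfl
            intro T hT
            obtain ⟨hTsub, hTcard⟩ := Finset.mem_powersetCard.mp hT
            rw [Finset.sum_ite_mem, Finset.inter_eq_right.mpr hTsub, Finset.sum_const,
              nsmul_eq_mul, hTcard]
            push_cast
            ring
        _ = ∑ v ∈ F, ∑ T ∈ (F.powersetCard (k+1)).filter (fun T => v ∈ T),
              Real.exp (l * (∑ x ∈ T, val x - ((k:ℝ)+1) * μ)) := by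
            rw [Finset.sum_comm]
            apply Finset.sum_congr rfl
            intro v hv
            rw [Finset.sum_filter]
        _ = ∑ v ∈ F, Real.exp (l * d v) *
              ∑ T' ∈ (F.erase v).powersetCard k,
                Real.exp (l * (∑ x ∈ T', val x - k * μ' v)) := by
            apply Finset.sum_congr rfl
            intro v hv
            rw [Finset.mul_sum]
            refine Finset.sum_bij' (fun T _ => T.erase v) (fun T' _ => insert v T')
              ?_ ?_ ?_ ?_ ?_
            · intro T hT
              rw [Finset.mem_filter, Finset.mem_powersetCard] at hT
              rw [Finset.mem_powersetCard]
              refine ⟨fun x hx => ?_, ?_⟩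
              · rw [Finset.mem_erase] at hx ⊢
                exact ⟨hx.1, hT.1.1 hx.2⟩
              · rw [Finset.card_erase_of_mem hT.2, hT.1.2]
                omega
            · intro T' hT'
              rw [Finset.mem_powersetCard] at hT'
              have hvT' : v ∉ T' := fun h => (Finset.mem_erase.mp (hT'.1 h)).1 rfl
              rw [Finset.mem_filter, Finset.mem_powersetCard]
              refine ⟨⟨fun x hx => ?_, ?_⟩, Finset.mem_insert_self v T'⟩
              · rcases Finset.mem_insert.mp hx with h | h
                · rwa [h]
                · exact Finset.erase_subset v F (hT'.1 h)
              · rw [Finset.card_insert_of_notMem hvT', hT'.2]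
            · intro T hT
              simp only [Finset.mem_filter] at hT
              exact Finset.insert_erase hT.2
            · intro T' hT'
              simp only [Finset.mem_powersetCard] at hT'
              have hvT' : v ∉ T' := fun h => (Finset.mem_erase.mp (hT'.1 h)).1 rfl
              exact Finset.erase_insert hvT'
            · intro T hT
              rw [Finset.mem_filter, Finset.mem_powersetCard] at hT
              have hvT : v ∈ T := hT.2
              have hsumT : ∑ x ∈ T, val x = val v + ∑ x ∈ T.erase v, val x := by
                rw [Finset.add_sum_erase T val hvT]
              rw [← Real.exp_add]
              congr 1
              rw [hsumT]
              simp only [hd]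
              ring
    -- apply the induction hypothesis
    have hstep : ∀ v ∈ F, ∑ T' ∈ (F.erase v).powersetCard k,
          Real.exp (l * (∑ x ∈ T', val x - k * μ' v))
        ≤ (((m-1).choose k : ℕ) : ℝ) * Real.exp (l ^ 2 * k * R ^ 2) := by
      intro v hv
      have hkle : k ≤ (F.erase v).card := by
        rw [Finset.card_erase_of_mem hv]; omega
      have h0 := ih (F.erase v) hkle
        (fun x hx y hy => hR x (Finset.erase_subset v F hx) y (Finset.erase_subset v F hy))
      have hce : #(F.erase v) = m - 1 := by rw [Finset.card_erase_of_mem hv]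
      simp only [hμ', hce]
      simpa [hce] using h0
    have hmain : ((k:ℝ) + 1) *
          ∑ T ∈ F.powersetCard (k+1), Real.exp (l * (∑ x ∈ T, val x - ((k:ℝ)+1) * μ))
        ≤ ((m:ℝ) * Real.exp (l ^ 2 * R ^ 2)) *
            ((((m-1).choose k : ℕ) : ℝ) * Real.exp (l ^ 2 * k * R ^ 2)) := by
      rw [hcount]
      calc ∑ v ∈ F, Real.exp (l * d v) *
              ∑ T' ∈ (F.erase v).powersetCard k,
                Real.exp (l * (∑ x ∈ T', val x - k * μ' v))
          ≤ ∑ v ∈ F, Real.exp (l * d v) *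
              ((((m-1).choose k : ℕ) : ℝ) * Real.exp (l ^ 2 * k * R ^ 2)) := by
            apply Finset.sum_le_sum
            intro v hv
            exact mul_le_mul_of_nonneg_left (hstep v hv) (Real.exp_pos _).le
        _ = (∑ v ∈ F, Real.exp (l * d v)) *
              ((((m-1).choose k : ℕ) : ℝ) * Real.exp (l ^ 2 * k * R ^ 2)) := by
            rw [Finset.sum_mul]
        _ ≤ ((m:ℝ) * Real.exp (l ^ 2 * R ^ 2)) *
              ((((m-1).choose k : ℕ) : ℝ) * Real.exp (l ^ 2 * k * R ^ 2)) := by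
            apply mul_le_mul_of_nonneg_right hexp_d (by positivity)
    -- combine with the choose identity
    have hchoose : (m:ℝ) * (((m-1).choose k : ℕ) : ℝ) = ((k:ℝ)+1) * ((m.choose (k+1) : ℕ) : ℝ) := by
      have h := Nat.add_one_mul_choose_eq (m-1) k
      have hm1 : m - 1 + 1 = m := by omega
      rw [hm1] at h
      have h2 : (m:ℝ) * (((m-1).choose k : ℕ) : ℝ)
          = ((m.choose (k+1) : ℕ) : ℝ) * ((k:ℝ)+1) := by exact_mod_cast h
      linarith
    have hfin : ∑ T ∈ F.powersetCard (k+1), Real.exp (l * (∑ x ∈ T, val x - ((k:ℝ)+1) * μ))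
        ≤ ((m.choose (k+1) : ℕ) : ℝ) * Real.exp (l ^ 2 * ((k:ℝ)+1) * R ^ 2) := by
      have hk1 : (0:ℝ) < (k:ℝ) + 1 := by positivity
      rw [← mul_le_mul_iff_right₀ hk1]
      calc ((k:ℝ)+1) * ∑ T ∈ F.powersetCard (k+1),
              Real.exp (l * (∑ x ∈ T, val x - ((k:ℝ)+1) * μ))
          ≤ ((m:ℝ) * Real.exp (l ^ 2 * R ^ 2)) *
              ((((m-1).choose k : ℕ) : ℝ) * Real.exp (l ^ 2 * k * R ^ 2)) := hmain
        _ = ((m:ℝ) * (((m-1).choose k : ℕ) : ℝ)) *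
              (Real.exp (l ^ 2 * R ^ 2) * Real.exp (l ^ 2 * k * R ^ 2)) := by ring
        _ = ((k:ℝ)+1) * (((m.choose (k+1) : ℕ) : ℝ) *
              Real.exp (l ^ 2 * ((k:ℝ)+1) * R ^ 2)) := by
            rw [hchoose, ← Real.exp_add]
            ring_nf
    push_cast
    exact hfin

lemma chernoff_count {α : Type*} [Fintype α] (g : α → ℝ) (N D s : ℝ)
    (hD : 0 < D) (hs : 0 < s)
    (h : ∀ l : ℝ, (∑ p : α, Real.exp (l * g p)) ≤ N * Real.exp (l ^ 2 * D)) :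
    ((univ.filter (fun p => s ≤ g p)).card : ℝ) ≤ N * Real.exp (-(s ^ 2 / (4 * D))) := by
  set l : ℝ := s / (2 * D) with hl
  have hl0 : 0 < l := div_pos hs (by linarith)
  have h1 : ((univ.filter (fun p => s ≤ g p)).card : ℝ)
      ≤ ∑ p ∈ univ.filter (fun p => s ≤ g p), Real.exp (l * (g p - s)) := by
    rw [Finset.card_eq_sum_ones]
    push_cast
    apply Finset.sum_le_sum
    intro p hp
    have hp' := (Finset.mem_filter.mp hp).2
    have : 0 ≤ l * (g p - s) := mul_nonneg hl0.le (by linarith)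
    exact Real.one_le_exp this
  have h2 : ∑ p ∈ univ.filter (fun p => s ≤ g p), Real.exp (l * (g p - s))
      ≤ ∑ p : α, Real.exp (l * (g p - s)) :=
    Finset.sum_le_sum_of_subset_of_nonneg (Finset.filter_subset _ _)
      (fun _ _ _ => (Real.exp_pos _).le)
  have h3 : ∑ p : α, Real.exp (l * (g p - s))
      = (∑ p : α, Real.exp (l * g p)) * Real.exp (-(l * s)) := by
    rw [Finset.sum_mul]
    apply Finset.sum_congr rfl
    intro p _
    rw [← Real.exp_add]
    congr 1
    ring
  have h4 : (∑ p : α, Real.exp (l * g p)) * Real.exp (-(l * s))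
      ≤ N * Real.exp (l ^ 2 * D) * Real.exp (-(l * s)) :=
    mul_le_mul_of_nonneg_right (h l) (Real.exp_pos _).le
  have h5 : N * Real.exp (l ^ 2 * D) * Real.exp (-(l * s))
      = N * Real.exp (-(s ^ 2 / (4 * D))) := by
    rw [mul_assoc, ← Real.exp_add]
    congr 2
    rw [hl]
    field_simp
    ring
  linarith

noncomputable def mwwH {n : ℕ} (k l : Fin n) : ℝ :=
  if k < l then 1 / 2 else if l < k then -(1 / 2) else 0

lemma mwwH_add_swap {n : ℕ} (k l : Fin n) : mwwH k l + mwwH l k = 0 := by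
  rcases lt_trichotomy k l with h | h | h
  · simp [mwwH, h, lt_asymm h]
  · simp [mwwH, h, lt_irrefl]
  · simp [mwwH, h, lt_asymm h]

lemma sum_mwwH {n : ℕ} (u : Fin n) :
    ∑ l : Fin n, mwwH u l = ((n : ℝ) - 1) / 2 - ((u : ℕ) : ℝ) := by
  have h1 : ∑ l : Fin n, mwwH u l
      = ∑ i ∈ Finset.range n,
          (if (u : ℕ) < i then (1 : ℝ) / 2 else if i < (u : ℕ) then -(1 / 2) else 0) := by
    rw [← Fin.sum_univ_eq_sum_range
      (fun i => if (u : ℕ) < i then (1 : ℝ) / 2 else if i < (u : ℕ) then -(1 / 2) else 0) n]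
    apply Finset.sum_congr rfl
    intro l _
    unfold mwwH
    rcases lt_trichotomy ((u : ℕ)) ((l : ℕ)) with h | h | h
    · rw [if_pos (Fin.lt_def.mpr h), if_pos h]
    · have g1 : ¬ u < l := by rw [Fin.lt_def]; omega
      have g2 : ¬ l < u := by rw [Fin.lt_def]; omega
      rw [if_neg g1, if_neg g2, if_neg (by omega), if_neg (by omega)]
    · have g1 : ¬ u < l := by rw [Fin.lt_def]; omega
      rw [if_neg g1, if_pos (Fin.lt_def.mpr h), if_neg (by omega), if_pos h]
  rw [h1]
  have h2 : ∀ i : ℕ, (if (u : ℕ) < i then (1 : ℝ) / 2 else if i < (u : ℕ) then -(1 / 2) else 0)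
      = (if (u : ℕ) < i then (1 : ℝ) / 2 else 0) + (if i < (u : ℕ) then -(1 / 2 : ℝ) else 0) := by
    intro i
    rcases lt_trichotomy ((u : ℕ)) i with h | h | h
    · simp [h, Nat.lt_asymm h]
    · have l1 : ¬ (u : ℕ) < i := by omega
      have l2 : ¬ i < (u : ℕ) := by omega
      simp [l1, l2]
    · simp [h, Nat.lt_asymm h]
  rw [Finset.sum_congr rfl (fun i _ => h2 i), Finset.sum_add_distrib,
    ← Finset.sum_filter, ← Finset.sum_filter]
  have h3 : (Finset.range n).filter (fun i => (u : ℕ) < i) = Finset.Ico ((u : ℕ) + 1) n := by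
    ext i
    simp only [Finset.mem_filter, Finset.mem_range, Finset.mem_Ico]
    omega
  have h4 : (Finset.range n).filter (fun i => i < (u : ℕ)) = Finset.range (u : ℕ) := by
    have hu : (u : ℕ) < n := u.isLt
    ext i
    simp only [Finset.mem_filter, Finset.mem_range]
    omega
  rw [h3, h4, Finset.sum_const, Finset.sum_const, Nat.card_Ico, Finset.card_range,
    nsmul_eq_mul, nsmul_eq_mul]
  have hu : (u : ℕ) < n := u.isLt
  push_cast [Nat.cast_sub (by omega : (u : ℕ) + 1 ≤ n)]
  ring

lemma sum_sum_mwwH_eq_zero {n : ℕ} (p : Equiv.Perm (Fin n)) (A : Finset (Fin n)) :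
    ∑ s ∈ A, ∑ t ∈ A, mwwH (p s) (p t) = 0 := by
  have h2 : ∑ s ∈ A, ∑ t ∈ A, mwwH (p s) (p t)
      = ∑ s ∈ A, ∑ t ∈ A, mwwH (p t) (p s) := Finset.sum_comm
  have h3 : (∑ s ∈ A, ∑ t ∈ A, mwwH (p s) (p t))
      + (∑ s ∈ A, ∑ t ∈ A, mwwH (p t) (p s)) = 0 := by
    rw [← Finset.sum_add_distrib]
    apply Finset.sum_eq_zero
    intro s _
    rw [← Finset.sum_add_distrib]
    apply Finset.sum_eq_zero
    intro t _
    exact mwwH_add_swap _ _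
  linarith

set_option maxHeartbeats 1000000 in
/-- Concentration for the centered Mann-Whitney-Wilcoxon statistic: with the MWW
array `a` (bounded by `b = 1/2`) and a uniformly random rank permutation `π`,
`W₁ = n^{-3/2} Σ_{s≠t} a_{s,t,π(s),π(t)}` satisfies
`P(W₁ ≥ t), P(W₁ ≤ -t) ≤ exp(-t²n/(4(2n-1)(6 + 4/n + 1/n²)))`. -/
theorem mww_concentration (n₁ n₂ n : ℕ) (hn : n = n₁ + n₂) (hn1 : 1 ≤ n)
    (a : Fin n → Fin n → Fin n → Fin n → ℝ)
    (ha : ∀ i j k l, a i j k l =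
      if (i : ℕ) < n₁ ∧ n₁ ≤ (j : ℕ) ∧ k < l then 1 / 2
      else if (i : ℕ) < n₁ ∧ n₁ ≤ (j : ℕ) ∧ l < k then -(1 / 2) else 0)
    (W : Equiv.Perm (Fin n) → ℝ)
    (hW : ∀ p : Equiv.Perm (Fin n),
      W p = ((n : ℝ) * Real.sqrt n)⁻¹ * ∑ s, ∑ t ∈ univ \ {s}, a s t (p s) (p t))
    (t : ℝ) (ht : 0 < t) :
    ((univ.filter (fun p : Equiv.Perm (Fin n) => t ≤ W p)).card : ℝ) /
        (Fintype.card (Equiv.Perm (Fin n)))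
      ≤ Real.exp (-(t ^ 2 * n /
          (4 * (2 * (n : ℝ) - 1) * (6 + 4 / n + 1 / (n : ℝ) ^ 2)))) ∧
    ((univ.filter (fun p : Equiv.Perm (Fin n) => W p ≤ -t)).card : ℝ) /
        (Fintype.card (Equiv.Perm (Fin n)))
      ≤ Real.exp (-(t ^ 2 * n /
          (4 * (2 * (n : ℝ) - 1) * (6 + 4 / n + 1 / (n : ℝ) ^ 2)))) := by
  by_cases hdeg : n₁ = 0 ∨ n = 1
  · -- degenerate case : W is identically zero
    have hW0 : ∀ p : Equiv.Perm (Fin n), W p = 0 := by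
      intro p
      rw [hW p]
      have hz : (∑ s, ∑ t ∈ univ \ {s}, a s t (p s) (p t)) = 0 := by
        rcases hdeg with h0 | h1
        · apply Finset.sum_eq_zero; intro s _
          apply Finset.sum_eq_zero; intro tt _
          rw [ha]
          simp [h0]
        · subst h1
          apply Finset.sum_eq_zero; intro s _
          have he : (univ : Finset (Fin 1)) \ {s} = ∅ := by
            ext x
            simp only [Finset.mem_sdiff, Finset.mem_univ, Finset.mem_singleton, true_and,
              Finset.notMem_empty, iff_false, not_not]
            exact Subsingleton.elim x s
          rw [he, Finset.sum_empty]
      rw [hz, mul_zero]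
    have he1 : (univ.filter (fun p : Equiv.Perm (Fin n) => t ≤ W p)) = ∅ := by
      apply Finset.filter_false_of_mem
      intro p _
      rw [hW0 p]
      linarith
    have he2 : (univ.filter (fun p : Equiv.Perm (Fin n) => W p ≤ -t)) = ∅ := by
      apply Finset.filter_false_of_mem
      intro p _
      rw [hW0 p]
      push_neg
      linarith
    constructor
    · rw [he1]
      simp
      positivity
    · rw [he2]
      simp
      positivity
  · push_neg at hdeg
    obtain ⟨h10, hne1⟩ := hdeg
    have hn₁pos : 1 ≤ n₁ := Nat.one_le_iff_ne_zero.mpr h10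
    have hn2 : 2 ≤ n := by omega
    have hn₁n : n₁ ≤ n := by omega
    have hnR : (2 : ℝ) ≤ n := by exact_mod_cast hn2
    have hn₁R : (1 : ℝ) ≤ n₁ := by exact_mod_cast hn₁pos
    have hn₁leR : (n₁ : ℝ) ≤ n := by exact_mod_cast hn₁n
    set A : Finset (Fin n) := univ.filter (fun s : Fin n => (s : ℕ) < n₁) with hA
    have hAcard : A.card = n₁ := by
      have himg : A.image (Fin.val) = Finset.range n₁ := by
        ext i
        simp only [hA, Finset.mem_image, Finset.mem_filter, Finset.mem_univ, true_and,
          Finset.mem_range]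
        constructor
        · rintro ⟨x, hx, rfl⟩; exact hx
        · intro hi
          exact ⟨⟨i, lt_of_lt_of_le hi hn₁n⟩, hi, rfl⟩
      have hinj := Finset.card_image_of_injective A (Fin.val_injective)
      rw [himg, Finset.card_range] at hinj
      omega
    set Sf : Equiv.Perm (Fin n) → ℝ := fun p => ∑ s ∈ A, ((p s : ℕ) : ℝ) with hSf
    set M : ℝ := (n₁ : ℝ) * ((n : ℝ) - 1) / 2 with hM
    -- the combinatorial identity
    have hkey : ∀ p : Equiv.Perm (Fin n),
        (∑ s, ∑ t ∈ univ \ {s}, a s t (p s) (p t)) = M - Sf p := by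
      intro p
      have hstep1 : ∀ s : Fin n, ¬ ((s : ℕ) < n₁) →
          ∑ t ∈ univ \ {s}, a s t (p s) (p t) = 0 := by
        intro s hs
        apply Finset.sum_eq_zero
        intro tt _
        rw [ha]
        simp [hs]
      have hsplit : (∑ s, ∑ t ∈ univ \ {s}, a s t (p s) (p t))
          = ∑ s ∈ A, ∑ t ∈ univ \ {s}, a s t (p s) (p t) := by
        rw [← Finset.sum_filter_add_sum_filter_not univ (fun s : Fin n => (s : ℕ) < n₁)]
        rw [Finset.sum_eq_zero (fun s hs => hstep1 s (Finset.mem_filter.mp hs).2), add_zero]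
      have hB : ∀ s ∈ A, ∑ t ∈ univ \ {s}, a s t (p s) (p t)
          = ∑ tt ∈ univ.filter (fun tt : Fin n => ¬ (tt : ℕ) < n₁), mwwH (p s) (p tt) := by
        intro s hs
        have hsn : (s : ℕ) < n₁ := (Finset.mem_filter.mp hs).2
        rw [← Finset.sum_filter_add_sum_filter_not (univ \ {s})
          (fun tt : Fin n => ¬ (tt : ℕ) < n₁)]
        have hz2 : ∑ tt ∈ (univ \ {s}).filter (fun tt : Fin n => ¬ ¬ (tt : ℕ) < n₁),
            a s tt (p s) (p tt) = 0 := by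
          apply Finset.sum_eq_zero
          intro tt htt
          have h2 := (Finset.mem_filter.mp htt).2
          rw [not_not] at h2
          rw [ha]
          have : ¬ n₁ ≤ (tt : ℕ) := by omega
          simp [this]
        rw [hz2, add_zero]
        have hset : (univ \ {s}).filter (fun tt : Fin n => ¬ (tt : ℕ) < n₁)
            = univ.filter (fun tt : Fin n => ¬ (tt : ℕ) < n₁) := by
          ext tt
          simp only [Finset.mem_filter, Finset.mem_sdiff, Finset.mem_univ,
            Finset.mem_singleton, true_and]
          constructor
          · rintro ⟨_, h2⟩; exact h2
          · intro h2
            refine ⟨?_, h2⟩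
            intro he
            rw [he] at h2
            omega
        rw [hset]
        apply Finset.sum_congr rfl
        intro tt htt
        have htn : n₁ ≤ (tt : ℕ) := by
          have := (Finset.mem_filter.mp htt).2
          omega
        rw [ha]
        simp [hsn, htn, mwwH]
      have hBA : ∀ s ∈ A, ∑ tt ∈ univ.filter (fun tt : Fin n => ¬ (tt : ℕ) < n₁),
          mwwH (p s) (p tt)
          = (∑ tt : Fin n, mwwH (p s) (p tt)) - ∑ tt ∈ A, mwwH (p s) (p tt) := by
        intro s _
        have := Finset.sum_filter_add_sum_filter_not univ
          (fun tt : Fin n => (tt : ℕ) < n₁) (fun tt => mwwH (p s) (p tt))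
        rw [hA]
        linarith
      have hfull : ∀ s : Fin n, (∑ tt : Fin n, mwwH (p s) (p tt))
          = ((n : ℝ) - 1) / 2 - ((p s : ℕ) : ℝ) := by
        intro s
        rw [Equiv.sum_comp p (fun l => mwwH (p s) l)]
        exact sum_mwwH (p s)
      calc (∑ s, ∑ t ∈ univ \ {s}, a s t (p s) (p t))
          = ∑ s ∈ A, ∑ t ∈ univ \ {s}, a s t (p s) (p t) := hsplit
        _ = ∑ s ∈ A, ((∑ tt : Fin n, mwwH (p s) (p tt)) - ∑ tt ∈ A, mwwH (p s) (p tt)) := by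
            apply Finset.sum_congr rfl
            intro s hs
            rw [hB s hs, hBA s hs]
        _ = ∑ s ∈ A, (((n : ℝ) - 1) / 2 - ((p s : ℕ) : ℝ))
              - ∑ s ∈ A, ∑ tt ∈ A, mwwH (p s) (p tt) := by
            rw [← Finset.sum_sub_distrib]
            apply Finset.sum_congr rfl
            intro s hs
            rw [hfull s]
        _ = M - Sf p := by
            rw [sum_sum_mwwH_eq_zero p A, Finset.sum_sub_distrib, Finset.sum_const,
              nsmul_eq_mul, hAcard, hSf, hM]
            ring
    -- fibers over the image of A
    set Pset : Finset (Finset (Fin n)) := (univ : Finset (Fin n)).powersetCard n₁ with hPset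
    set fib : Finset (Fin n) → Finset (Equiv.Perm (Fin n)) :=
      fun T => univ.filter (fun p : Equiv.Perm (Fin n) => A.image (⇑p) = T) with hfib
    have hmapsto : ∀ p : Equiv.Perm (Fin n), A.image ⇑p ∈ Pset := by
      intro p
      rw [hPset, Finset.mem_powersetCard]
      exact ⟨Finset.subset_univ _,
        by rw [Finset.card_image_of_injective _ p.injective, hAcard]⟩
    have hfibcard : ∀ T ∈ Pset, ∀ T' ∈ Pset, (fib T).card = (fib T').card := by
      intro T hT T' hT'
      obtain ⟨-, hTc⟩ := Finset.mem_powersetCard.mp hT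
      obtain ⟨-, hT'c⟩ := Finset.mem_powersetCard.mp hT'
      have hcards : Fintype.card {x // x ∈ T} = Fintype.card {x // x ∈ T'} := by
        simp only [Fintype.card_coe]
        rw [hTc, hT'c]
      have hcardsc : Fintype.card {x : Fin n // ¬ x ∈ T} = Fintype.card {x : Fin n // ¬ x ∈ T'} := by
        rw [Fintype.card_subtype_compl, Fintype.card_subtype_compl, hcards]
      set e := Fintype.equivOfCardEq hcards with he
      set f := Fintype.equivOfCardEq hcardsc with hf
      set τ : Equiv.Perm (Fin n) := Equiv.subtypeCongr e f with hτ
      have hτmem : ∀ x ∈ T, τ x ∈ T' := by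
        intro x hx
        have hstep : τ x = ↑(e ⟨x, hx⟩) := by
          simp [hτ, Equiv.subtypeCongr, hx]
        rw [hstep]
        exact (e ⟨x, hx⟩).2
      have hτimg : T.image ⇑τ = T' := by
        apply Finset.eq_of_subset_of_card_le
        · intro y hy
          obtain ⟨x, hx, rfl⟩ := Finset.mem_image.mp hy
          exact hτmem x hx
        · rw [Finset.card_image_of_injective _ τ.injective, hTc, hT'c]
      have hτimg' : T'.image ⇑τ.symm = T := by
        rw [← hτimg, Finset.image_image]
        have : (⇑τ.symm ∘ ⇑τ) = id := by
          funext x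
          simp
        rw [this, Finset.image_id]
      apply Finset.card_bij' (fun (p : Equiv.Perm (Fin n)) (_ : p ∈ fib T) => p.trans τ)
        (fun (q : Equiv.Perm (Fin n)) (_ : q ∈ fib T') => q.trans τ.symm)
      · intro p hp
        have himg := (Finset.mem_filter.mp hp).2
        rw [hfib, Finset.mem_filter]
        refine ⟨Finset.mem_univ _, ?_⟩
        rw [Equiv.coe_trans, ← Finset.image_image, himg, hτimg]
      · intro q hq
        have himg := (Finset.mem_filter.mp hq).2
        rw [hfib, Finset.mem_filter]
        refine ⟨Finset.mem_univ _, ?_⟩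
        rw [Equiv.coe_trans, ← Finset.image_image, himg, hτimg']
      · intro p _
        ext x
        simp
      · intro q _
        ext x
        simp
    have hfibsum : ∑ T ∈ Pset, (fib T).card = Nat.factorial n := by
      have hcs := Finset.card_eq_sum_card_fiberwise
        (f := fun p : Equiv.Perm (Fin n) => A.image ⇑p)
        (s := (univ : Finset (Equiv.Perm (Fin n)))) (t := Pset)
        (fun p _ => hmapsto p)
      rw [Finset.card_univ, Fintype.card_perm, Fintype.card_fin] at hcs
      rw [← hcs]
    have hPsetne : Pset.Nonempty := by
      rw [hPset]
      apply Finset.powersetCard_nonempty.mpr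
      rw [Finset.card_univ, Fintype.card_fin]
      exact hn₁n
    obtain ⟨T₀, hT₀⟩ := hPsetne
    have hc₀ : ∀ T ∈ Pset, (fib T).card = (fib T₀).card :=
      fun T hT => hfibcard T hT T₀ hT₀
    have hc₀C : (fib T₀).card * Nat.choose n n₁ = Nat.factorial n := by
      have hstep : ∑ T ∈ Pset, (fib T).card = Pset.card * (fib T₀).card := by
        rw [Finset.sum_congr rfl hc₀, Finset.sum_const, smul_eq_mul]
      have hPc : Pset.card = Nat.choose n n₁ := by
        rw [hPset, Finset.card_powersetCard, Finset.card_univ, Fintype.card_fin]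
      rw [← hfibsum, hstep, hPc]
      ring
    -- the moment generating function bound
    set R : ℝ := (n : ℝ) - 1 with hR
    set D : ℝ := (n₁ : ℝ) * R ^ 2 with hD
    have hRpos : 0 < R := by rw [hR]; linarith
    have hDpos : 0 < D := by
      rw [hD]
      apply mul_pos (by linarith) (by positivity)
    have hval : ∀ x : Fin n, ∀ y : Fin n, |((x : ℕ) : ℝ) - ((y : ℕ) : ℝ)| ≤ R := by
      intro x y
      have hx : ((x : ℕ) : ℝ) ≤ (n : ℝ) - 1 := by
        have := x.isLt
        have : ((x : ℕ) : ℝ) < (n : ℝ) := by exact_mod_cast this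
        have hxn : (x : ℕ) + 1 ≤ n := x.isLt
        have : ((x : ℕ) : ℝ) + 1 ≤ (n : ℝ) := by exact_mod_cast hxn
        linarith
      have hy : ((y : ℕ) : ℝ) ≤ (n : ℝ) - 1 := by
        have hyn : (y : ℕ) + 1 ≤ n := y.isLt
        have : ((y : ℕ) : ℝ) + 1 ≤ (n : ℝ) := by exact_mod_cast hyn
        linarith
      have hx0 : (0 : ℝ) ≤ ((x : ℕ) : ℝ) := Nat.cast_nonneg _
      have hy0 : (0 : ℝ) ≤ ((y : ℕ) : ℝ) := Nat.cast_nonneg _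
      rw [abs_le, hR]
      constructor <;> linarith
    have hsumfin : ∑ x : Fin n, ((x : ℕ) : ℝ) = (n : ℝ) * ((n : ℝ) - 1) / 2 := by
      rw [Fin.sum_univ_eq_sum_range (fun i => (i : ℝ)) n]
      have h2 := Finset.sum_range_id_mul_two n
      have h3 := congrArg (Nat.cast (R := ℝ)) h2
      push_cast [Nat.cast_sub (by omega : 1 ≤ n)] at h3
      linarith
    have hmean : (n₁ : ℝ) * ((∑ x : Fin n, ((x : ℕ) : ℝ))
        / (((univ : Finset (Fin n)).card : ℕ) : ℝ)) = M := by
      rw [hsumfin, Finset.card_univ, Fintype.card_fin, hM]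
      have hnne : (n : ℝ) ≠ 0 := by linarith
      field_simp
      ring
    have hmgf : ∀ l : ℝ, (∑ p : Equiv.Perm (Fin n), Real.exp (l * (Sf p - M)))
        ≤ (Nat.factorial n : ℝ) * Real.exp (l ^ 2 * D) := by
      intro l
      have hfw := Finset.sum_fiberwise_of_maps_to
        (g := fun p : Equiv.Perm (Fin n) => A.image ⇑p)
        (t := Pset) (fun p (_ : p ∈ (univ : Finset (Equiv.Perm (Fin n)))) => hmapsto p)
        (fun p => Real.exp (l * (Sf p - M)))
      have hinner : ∀ T ∈ Pset, (∑ p ∈ fib T, Real.exp (l * (Sf p - M)))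
          = ((fib T).card : ℝ) * Real.exp (l * ((∑ x ∈ T, ((x : ℕ) : ℝ)) - M)) := by
        intro T hT
        rw [Finset.sum_congr rfl (fun p hp => ?_), Finset.sum_const, nsmul_eq_mul]
        have himg := (Finset.mem_filter.mp hp).2
        have hSfp : Sf p = ∑ x ∈ T, ((x : ℕ) : ℝ) := by
          rw [hSf, ← himg,
            Finset.sum_image (fun x _ y _ hxy => p.injective hxy)]
        rw [hSfp]
      have hmgfsub := mgf_bound (fun x : Fin n => ((x : ℕ) : ℝ)) R l n₁
        (univ : Finset (Fin n))
        (by rw [Finset.card_univ, Fintype.card_fin]; exact hn₁n)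
        (fun x _ y _ => hval x y)
      rw [hmean] at hmgfsub
      rw [Finset.card_univ, Fintype.card_fin] at hmgfsub
      calc (∑ p : Equiv.Perm (Fin n), Real.exp (l * (Sf p - M)))
          = ∑ T ∈ Pset, (∑ p ∈ fib T, Real.exp (l * (Sf p - M))) := by rw [hfw]
        _ = ∑ T ∈ Pset, ((fib T).card : ℝ)
              * Real.exp (l * ((∑ x ∈ T, ((x : ℕ) : ℝ)) - M)) :=
            Finset.sum_congr rfl hinner
        _ = ((fib T₀).card : ℝ)
              * ∑ T ∈ Pset, Real.exp (l * ((∑ x ∈ T, ((x : ℕ) : ℝ)) - M)) := by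
            rw [Finset.mul_sum]
            apply Finset.sum_congr rfl
            intro T hT
            rw [hc₀ T hT]
        _ ≤ ((fib T₀).card : ℝ)
              * ((Nat.choose n n₁ : ℝ) * Real.exp (l ^ 2 * (n₁ : ℝ) * R ^ 2)) := by
            apply mul_le_mul_of_nonneg_left _ (Nat.cast_nonneg _)
            exact hmgfsub
        _ = (Nat.factorial n : ℝ) * Real.exp (l ^ 2 * D) := by
            have hcast : ((fib T₀).card : ℝ) * (Nat.choose n n₁ : ℝ)
                = (Nat.factorial n : ℝ) := by exact_mod_cast hc₀C
            rw [hD]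
            rw [show l ^ 2 * ((n₁ : ℝ) * R ^ 2) = l ^ 2 * (n₁ : ℝ) * R ^ 2 by ring]
            rw [← hcast]
            ring
    -- Chernoff bounds for both tails
    set ν : ℝ := (n : ℝ) * Real.sqrt n with hν
    have hnpos : (0 : ℝ) < n := by linarith
    have hνpos : 0 < ν := by
      rw [hν]
      exact mul_pos hnpos (Real.sqrt_pos.mpr hnpos)
    set s₀ : ℝ := t * ν with hs₀
    have hs₀pos : 0 < s₀ := mul_pos ht hνpos
    have hs₀sq : s₀ ^ 2 = t ^ 2 * (n : ℝ) ^ 3 := by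
      rw [hs₀, hν, mul_pow, mul_pow, Real.sq_sqrt (le_of_lt hnpos)]
      ring
    have hub : ((univ.filter (fun p : Equiv.Perm (Fin n) => s₀ ≤ M - Sf p)).card : ℝ)
        ≤ (Nat.factorial n : ℝ) * Real.exp (-(s₀ ^ 2 / (4 * D))) := by
      apply chernoff_count (fun p => M - Sf p) _ D s₀ hDpos hs₀pos
      intro l
      calc (∑ p : Equiv.Perm (Fin n), Real.exp (l * (M - Sf p)))
          = ∑ p : Equiv.Perm (Fin n), Real.exp ((-l) * (Sf p - M)) := by
            apply Finset.sum_congr rfl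
            intro p _
            congr 1
            ring
        _ ≤ (Nat.factorial n : ℝ) * Real.exp ((-l) ^ 2 * D) := hmgf (-l)
        _ = (Nat.factorial n : ℝ) * Real.exp (l ^ 2 * D) := by
            rw [show ((-l) ^ 2 : ℝ) = l ^ 2 by ring]
    have hlb : ((univ.filter (fun p : Equiv.Perm (Fin n) => s₀ ≤ Sf p - M)).card : ℝ)
        ≤ (Nat.factorial n : ℝ) * Real.exp (-(s₀ ^ 2 / (4 * D))) := by
      apply chernoff_count (fun p => Sf p - M) _ D s₀ hDpos hs₀pos
      intro l
      exact hmgf l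
    -- rewrite the filters
    have hfeq1 : (univ.filter (fun p : Equiv.Perm (Fin n) => t ≤ W p))
        = univ.filter (fun p : Equiv.Perm (Fin n) => s₀ ≤ M - Sf p) := by
      apply Finset.filter_congr
      intro p _
      rw [hW p, hkey p]
      rw [inv_mul_eq_div, le_div_iff₀ hνpos, hs₀]
    have hfeq2 : (univ.filter (fun p : Equiv.Perm (Fin n) => W p ≤ -t))
        = univ.filter (fun p : Equiv.Perm (Fin n) => s₀ ≤ Sf p - M) := by
      apply Finset.filter_congr
      intro p _
      rw [hW p, hkey p]
      rw [inv_mul_eq_div, div_le_iff₀ hνpos, hs₀]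
      constructor <;> intro h <;> linarith
    -- final numeric comparison
    have hnum : t ^ 2 * (n : ℝ) / (4 * (2 * (n : ℝ) - 1) * (6 + 4 / (n : ℝ) + 1 / (n : ℝ) ^ 2))
        ≤ s₀ ^ 2 / (4 * D) := by
      have hd1 : (0 : ℝ) < 4 * (2 * (n : ℝ) - 1) * (6 + 4 / (n : ℝ) + 1 / (n : ℝ) ^ 2) := by
        have h1 : (0 : ℝ) < 2 * (n : ℝ) - 1 := by linarith
        have h2 : (0 : ℝ) < 6 + 4 / (n : ℝ) + 1 / (n : ℝ) ^ 2 := by positivity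
        positivity
      have hden : 24 * (n : ℝ)
          ≤ 4 * (2 * (n : ℝ) - 1) * (6 + 4 / (n : ℝ) + 1 / (n : ℝ) ^ 2) := by
        have h1 : (n : ℝ) ≤ 2 * (n : ℝ) - 1 := by linarith
        have h2 : (6 : ℝ) ≤ 6 + 4 / (n : ℝ) + 1 / (n : ℝ) ^ 2 := by
          have : (0 : ℝ) ≤ 4 / (n : ℝ) := by positivity
          have : (0 : ℝ) ≤ 1 / (n : ℝ) ^ 2 := by positivity
          linarith [div_nonneg (by norm_num : (0:ℝ) ≤ 4) (le_of_lt hnpos),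
            div_nonneg (by norm_num : (0:ℝ) ≤ 1) (sq_nonneg (n : ℝ))]
        nlinarith
      have step1 : t ^ 2 * (n : ℝ)
            / (4 * (2 * (n : ℝ) - 1) * (6 + 4 / (n : ℝ) + 1 / (n : ℝ) ^ 2))
          ≤ t ^ 2 * (n : ℝ) / (24 * (n : ℝ)) := by
        apply div_le_div_of_nonneg_left (by positivity) (by positivity) hden
      have step2 : t ^ 2 * (n : ℝ) / (24 * (n : ℝ)) = t ^ 2 / 24 := by
        rw [mul_comm (24 : ℝ) (n : ℝ), mul_comm (t ^ 2) (n : ℝ),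
          mul_div_mul_left _ _ (ne_of_gt hnpos)]
      have hDle : D ≤ (n : ℝ) ^ 3 := by
        rw [hD, hR]
        nlinarith
      have step3 : t ^ 2 / 24 ≤ t ^ 2 / 4 := by
        apply div_le_div_of_nonneg_left (by positivity) (by norm_num) (by norm_num)
      have step4 : t ^ 2 / 4 ≤ s₀ ^ 2 / (4 * D) := by
        rw [hs₀sq]
        have h44 : t ^ 2 / 4 = t ^ 2 * (n : ℝ) ^ 3 / (4 * (n : ℝ) ^ 3) := by
          field_simp
        rw [h44]
        apply div_le_div_of_nonneg_left (by positivity) (by positivity) (by nlinarith)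
      linarith
    -- assemble
    have hfactpos : (0 : ℝ) < (Nat.factorial n : ℝ) := by
      exact_mod_cast Nat.factorial_pos n
    have hcardperm : ((Fintype.card (Equiv.Perm (Fin n)) : ℕ) : ℝ)
        = (Nat.factorial n : ℝ) := by
      rw [Fintype.card_perm, Fintype.card_fin]
    have hexpmono : Real.exp (-(s₀ ^ 2 / (4 * D)))
        ≤ Real.exp (-(t ^ 2 * (n : ℝ)
          / (4 * (2 * (n : ℝ) - 1) * (6 + 4 / (n : ℝ) + 1 / (n : ℝ) ^ 2)))) := by
      apply Real.exp_le_exp.mpr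
      linarith
    constructor
    · rw [hfeq1, hcardperm, div_le_iff₀ hfactpos]
      calc ((univ.filter (fun p : Equiv.Perm (Fin n) => s₀ ≤ M - Sf p)).card : ℝ)
          ≤ (Nat.factorial n : ℝ) * Real.exp (-(s₀ ^ 2 / (4 * D))) := hub
        _ ≤ (Nat.factorial n : ℝ) * Real.exp (-(t ^ 2 * (n : ℝ)
              / (4 * (2 * (n : ℝ) - 1) * (6 + 4 / (n : ℝ) + 1 / (n : ℝ) ^ 2)))) :=
            mul_le_mul_of_nonneg_left hexpmono (le_of_lt hfactpos)
        _ = Real.exp (-(t ^ 2 * (n : ℝ)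
              / (4 * (2 * (n : ℝ) - 1) * (6 + 4 / (n : ℝ) + 1 / (n : ℝ) ^ 2))))
            * (Nat.factorial n : ℝ) := by ring
    · rw [hfeq2, hcardperm, div_le_iff₀ hfactpos]
      calc ((univ.filter (fun p : Equiv.Perm (Fin n) => s₀ ≤ Sf p - M)).card : ℝ)
          ≤ (Nat.factorial n : ℝ) * Real.exp (-(s₀ ^ 2 / (4 * D))) := hlb
        _ ≤ (Nat.factorial n : ℝ) * Real.exp (-(t ^ 2 * (n : ℝ)
              / (4 * (2 * (n : ℝ) - 1) * (6 + 4 / (n : ℝ) + 1 / (n : ℝ) ^ 2)))) :=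
            mul_le_mul_of_nonneg_left hexpmono (le_of_lt hfactpos)
        _ = Real.exp (-(t ^ 2 * (n : ℝ)
              / (4 * (2 * (n : ℝ) - 1) * (6 + 4 / (n : ℝ) + 1 / (n : ℝ) ^ 2))))
            * (Nat.factorial n : ℝ) := by ring
end

section
/- Let G₁ = (V, E₁) and G₂ = (V, E₂) be graphs on vertex set {1,…,n}, π uniform on S_n, and V₁ = Σ_{s≠t} 1((s,t) ∈ E₁) 1((π(s),π(t)) ∈ E₂). Then E(V₁) = 4|E₁||E₂|/(n(n−1)), and for all t > 0, P(n^{−3/2}(V₁ − 4|E₁||E₂|/(n(n−1))) ≥ t) ≤ exp(−nt² / (64(2n−1)(6 + 4/n + 1/n²))), with the same bound for the lower tail. -/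
open Finset

open scoped Classical

lemma exp_le_one_add {z : ℝ} (hz : |z| ≤ 1) : Real.exp z ≤ 1 + z + 3/4 * z^2 := by
  have h := Real.exp_bound hz (n := 2) (by norm_num)
  have hs : ∑ m ∈ Finset.range 2, z ^ m / m.factorial = 1 + z := by
    simp [Finset.sum_range_succ]
  rw [hs] at h
  have h2 := (abs_le.mp h).2
  have h3 : |z|^2 = z^2 := sq_abs z
  norm_num [Nat.factorial] at h2
  nlinarith [h2]

lemma sum_exp_le {ι : Type*} [Fintype ι] (y : ι → ℝ) (m c : ℝ) (hc1 : c ≤ 1)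
    (hsum : ∑ j, (y j - m) = 0) (hdev : ∀ j, |y j - m| ≤ c) :
    ∑ j, Real.exp (y j) ≤ (Fintype.card ι : ℝ) * Real.exp (m + 3/4 * c^2) := by
  have hstep : ∀ j, Real.exp (y j) ≤ Real.exp m * (1 + (y j - m) + 3/4 * (y j - m)^2) := by
    intro j
    have h1 := exp_le_one_add ((hdev j).trans hc1)
    have h2 : Real.exp (y j) = Real.exp m * Real.exp (y j - m) := by
      rw [← Real.exp_add]; ring_nf
    rw [h2]
    exact mul_le_mul_of_nonneg_left h1 (Real.exp_pos m).le
  have hsq : ∀ j, (y j - m)^2 ≤ c^2 := fun j => by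
    have h := hdev j
    nlinarith [abs_nonneg (y j - m), sq_abs (y j - m)]
  have hcard : (0:ℝ) ≤ (Fintype.card ι : ℝ) := Nat.cast_nonneg _
  calc ∑ j, Real.exp (y j)
      ≤ ∑ j, Real.exp m * (1 + (y j - m) + 3/4 * (y j - m)^2) :=
        Finset.sum_le_sum fun j _ => hstep j
    _ = Real.exp m * ((Fintype.card ι : ℝ) + 3/4 * ∑ j, (y j - m)^2) := by
        rw [← Finset.mul_sum]
        congr 1
        rw [Finset.sum_add_distrib, Finset.sum_add_distrib, hsum, ← Finset.mul_sum]
        simp [Finset.card_univ]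
    _ ≤ Real.exp m * ((Fintype.card ι : ℝ) + 3/4 * ((Fintype.card ι : ℝ) * c^2)) := by
        have hs2 : ∑ j, (y j - m)^2 ≤ (Fintype.card ι : ℝ) * c^2 := by
          calc ∑ j, (y j - m)^2 ≤ ∑ _j : ι, c^2 := Finset.sum_le_sum fun j _ => hsq j
            _ = (Fintype.card ι : ℝ) * c^2 := by
                rw [Finset.sum_const, Finset.card_univ, nsmul_eq_mul]
        nlinarith [Real.exp_pos m]
    _ = (Fintype.card ι : ℝ) * (Real.exp m * (1 + 3/4 * c^2)) := by ring
    _ ≤ (Fintype.card ι : ℝ) * (Real.exp m * Real.exp (3/4 * c^2)) := by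
        have h1 : 1 + 3/4*c^2 ≤ Real.exp (3/4 * c^2) := by
          have := Real.add_one_le_exp (3/4 * c^2); linarith
        exact mul_le_mul_of_nonneg_left
          (mul_le_mul_of_nonneg_left h1 (Real.exp_pos m).le) hcard
    _ = (Fintype.card ι : ℝ) * Real.exp (m + 3/4*c^2) := by rw [← Real.exp_add]

lemma deq_subsingleton {β : Type*} (i1 i2 : DecidableEq β) : i1 = i2 := by
  funext a b; exact Subsingleton.elim _ _

lemma swap_map {α β : Type*} [DecidableEq α] [DecidableEq β] (e : α ≃ β) (x y z : α) :
    e (Equiv.swap x y z) = Equiv.swap (e x) (e y) (e z) := by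
  by_cases hx : z = x
  · subst hx; simp
  by_cases hy : z = y
  · subst hy; simp
  rw [Equiv.swap_apply_of_ne_of_ne hx hy,
    Equiv.swap_apply_of_ne_of_ne (e.injective.ne hx) (e.injective.ne hy)]

lemma swap_some' {α : Type*} (instα : DecidableEq α) (instO : DecidableEq (Option α)) (x y b : α) :
    @Equiv.swap (Option α) instO (some x) (some y) (some b) = some (@Equiv.swap α instα x y b) := by
  by_cases hx : b = x
  · subst hx; simp
  by_cases hy : b = y
  · subst hy; simp
  rw [Equiv.swap_apply_of_ne_of_ne hx hy,
    Equiv.swap_apply_of_ne_of_ne (by simpa using hx) (by simpa using hy)]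

lemma swap_conj_mul {β : Type*} (i1 i2 : DecidableEq β) (u v a b : β) (q : Equiv.Perm β) :
    @Equiv.swap β i1 u v * (@Equiv.swap β i2 a b * q)
      = @Equiv.swap β i2 (@Equiv.swap β i1 u v a) (@Equiv.swap β i1 u v b)
          * (@Equiv.swap β i1 u v * q) := by
  cases deq_subsingleton i1 i2
  rw [← mul_assoc, Equiv.mul_swap_eq_swap_mul, mul_assoc]

lemma optionCongr_swap_mul {α : Type*} (instα : DecidableEq α) (instO : DecidableEq (Option α))
    (x y : α) (σ : Equiv.Perm α) :
    Equiv.optionCongr (@Equiv.swap α instα x y * σ)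
      = @Equiv.swap (Option α) instO (some x) (some y) * Equiv.optionCongr σ := by
  refine Equiv.ext fun z => ?_
  cases z with
  | none =>
    simp only [Equiv.optionCongr_apply, Option.map_none, Equiv.Perm.mul_apply]
    exact (Equiv.swap_apply_of_ne_of_ne (by simp) (by simp)).symm
  | some a =>
    simp only [Equiv.optionCongr_apply, Option.map_some, Equiv.Perm.mul_apply]
    exact (swap_some' instα instO x y (σ a)).symm

def MgfBound (α : Type) [Fintype α] [DecidableEq α] : Prop :=
  ∀ (f : Equiv.Perm α → ℝ) (D l : ℝ), 0 ≤ D →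
    (∀ (x y : α) (p : Equiv.Perm α), |f (Equiv.swap x y * p) - f p| ≤ D) →
    |l| * (2 * D) ≤ 1 →
    ∑ p : Equiv.Perm α, Real.exp (l * f p) ≤
      (Fintype.card (Equiv.Perm α) : ℝ) *
        Real.exp (l * ((∑ p : Equiv.Perm α, f p) / (Fintype.card (Equiv.Perm α) : ℝ))
          + 3 * (Fintype.card α : ℝ) * l ^ 2 * D ^ 2)

lemma mgf_transfer {α β : Type} [Fintype α] [DecidableEq α] [Fintype β] [DecidableEq β]
    (e : α ≃ β) (h : MgfBound α) : MgfBound β := by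
  intro f D l hD hf hl
  have hlip : ∀ (x y : α) (p : Equiv.Perm α),
      |(fun p => f (e.permCongr p)) (Equiv.swap x y * p)
        - (fun p => f (e.permCongr p)) p| ≤ D := by
    intro x y p
    have h1 : e.permCongr (Equiv.swap x y * p) = Equiv.swap (e x) (e y) * e.permCongr p := by
      refine Equiv.ext fun b => ?_
      simp only [Equiv.permCongr_apply, Equiv.Perm.mul_apply]
      exact swap_map e x y _
    simp only [h1]
    exact hf (e x) (e y) _
  have key := h (fun p => f (e.permCongr p)) D l hD hlip hl
  have hs1 : ∑ p : Equiv.Perm α, Real.exp (l * f (e.permCongr p))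
      = ∑ q : Equiv.Perm β, Real.exp (l * f q) :=
    Equiv.sum_comp e.permCongr (fun q => Real.exp (l * f q))
  have hs2 : ∑ p : Equiv.Perm α, f (e.permCongr p) = ∑ q : Equiv.Perm β, f q :=
    Equiv.sum_comp e.permCongr f
  have hc1 : (Fintype.card (Equiv.Perm α) : ℝ) = (Fintype.card (Equiv.Perm β) : ℝ) := by
    exact_mod_cast congrArg Nat.cast (Fintype.card_congr e.permCongr)
  have hc2 : (Fintype.card α : ℝ) = (Fintype.card β : ℝ) := by
    exact_mod_cast congrArg Nat.cast (Fintype.card_congr e)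
  rw [hs1, hs2, hc1, hc2] at key
  exact key

lemma mgf_pempty [DecidableEq PEmpty] : MgfBound PEmpty := by
  intro f D l hD hf hl
  have hp : ∀ p : Equiv.Perm PEmpty, p = 1 := fun p => Equiv.ext fun x => x.elim
  have hcard : Fintype.card (Equiv.Perm PEmpty) = 1 :=
    Fintype.card_eq_one_iff.mpr ⟨1, fun p => (hp p).trans (hp 1).symm⟩
  have hcard0 : Fintype.card PEmpty = 0 := by simp
  have hsum : ∀ (g : Equiv.Perm PEmpty → ℝ), ∑ p : Equiv.Perm PEmpty, g p = g 1 := by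
    intro g
    rw [show (univ : Finset (Equiv.Perm PEmpty)) = {1} by
      apply Finset.eq_singleton_iff_unique_mem.mpr
      exact ⟨Finset.mem_univ _, fun p _ => hp p⟩]
    simp
  rw [hsum, hsum, hcard, hcard0]
  norm_num

set_option maxHeartbeats 1000000 in
lemma mgf_option (α : Type) [Fintype α] [DecidableEq α] (hα : MgfBound α) :
    MgfBound (Option α) := by
  intro f D l hD hf hl
  have hN : (0:ℝ) < (Fintype.card (Equiv.Perm α) : ℝ) := by
    exact_mod_cast (Fintype.card_pos : 0 < Fintype.card (Equiv.Perm α))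
  set N : ℝ := (Fintype.card (Equiv.Perm α) : ℝ) with hNdef
  have hco : (Fintype.card (Option α) : ℝ) = (Fintype.card α : ℝ) + 1 := by
    rw [Fintype.card_option]; push_cast; ring
  have hco0 : (0:ℝ) < (Fintype.card (Option α) : ℝ) := by
    exact_mod_cast (Fintype.card_pos : 0 < Fintype.card (Option α))
  have hNo : (Fintype.card (Equiv.Perm (Option α)) : ℝ) = (Fintype.card (Option α) : ℝ) * N := by
    rw [show Fintype.card (Equiv.Perm (Option α)) = Fintype.card (Option α × Equiv.Perm α) from
      Fintype.card_congr Equiv.Perm.decomposeOption, Fintype.card_prod]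
    push_cast; ring
  have hsum : ∀ (g : Equiv.Perm (Option α) → ℝ),
      ∑ p : Equiv.Perm (Option α), g p
        = ∑ j : Option α, ∑ σ : Equiv.Perm α, g (Equiv.swap none j * σ.optionCongr) := by
    intro g
    rw [← Equiv.sum_comp (Equiv.Perm.decomposeOption (α := α)).symm g, Fintype.sum_prod_type]
    simp only [Equiv.Perm.decomposeOption_symm_apply]
  -- conditional mgf bounds
  have hIH : ∀ j : Option α,
      ∑ σ : Equiv.Perm α, Real.exp (l * f (Equiv.swap none j * σ.optionCongr))
        ≤ N * Real.exp (l * ((∑ σ : Equiv.Perm α, f (Equiv.swap none j * σ.optionCongr)) / N)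
            + 3 * (Fintype.card α : ℝ) * l ^ 2 * D ^ 2) := by
    intro j
    refine hα (fun σ => f (Equiv.swap none j * σ.optionCongr)) D l hD ?_ hl
    intro x y σ
    rw [optionCongr_swap_mul _ inferInstance x y σ, swap_conj_mul]
    exact hf _ _ _
  have hGdevN : ∀ j : Option α,
      |(∑ σ : Equiv.Perm α, f (Equiv.swap none j * σ.optionCongr))
        - (∑ σ : Equiv.Perm α, f σ.optionCongr)| ≤ N * D := by
    intro j
    calc |(∑ σ : Equiv.Perm α, f (Equiv.swap none j * σ.optionCongr))
        - (∑ σ : Equiv.Perm α, f σ.optionCongr)|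
        = |∑ σ : Equiv.Perm α, (f (Equiv.swap none j * σ.optionCongr) - f σ.optionCongr)| := by
          rw [Finset.sum_sub_distrib]
      _ ≤ ∑ σ : Equiv.Perm α, |f (Equiv.swap none j * σ.optionCongr) - f σ.optionCongr| :=
          Finset.abs_sum_le_sum_abs _ _
      _ ≤ ∑ _σ : Equiv.Perm α, D := Finset.sum_le_sum fun σ _ => hf none j _
      _ = N * D := by rw [Finset.sum_const, Finset.card_univ, nsmul_eq_mul]
  set G : Option α → ℝ := fun j =>
    (∑ σ : Equiv.Perm α, f (Equiv.swap none j * σ.optionCongr)) / N with hGdef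
  have hGdev : ∀ j k : Option α, |G j - G k| ≤ 2 * D := by
    intro j k
    have h1 := hGdevN j
    have h2 := hGdevN k
    rw [hGdef]
    simp only
    rw [div_sub_div_same, abs_div, abs_of_pos hN, div_le_iff₀ hN]
    calc |(∑ σ : Equiv.Perm α, f (Equiv.swap none j * σ.optionCongr))
          - (∑ σ : Equiv.Perm α, f (Equiv.swap none k * σ.optionCongr))| ≤ N * D + N * D := by
          have h3 := abs_sub_le (∑ σ : Equiv.Perm α, f (Equiv.swap none j * σ.optionCongr))
            (∑ σ : Equiv.Perm α, f σ.optionCongr)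
            (∑ σ : Equiv.Perm α, f (Equiv.swap none k * σ.optionCongr))
          have h2' : |(∑ σ : Equiv.Perm α, f σ.optionCongr)
              - (∑ σ : Equiv.Perm α, f (Equiv.swap none k * σ.optionCongr))| ≤ N * D := by
            rw [abs_sub_comm]; exact h2
          linarith
      _ = 2 * D * N := by ring
  set M : ℝ := (∑ k : Option α, G k) / (Fintype.card (Option α) : ℝ) with hMdef
  have hGM : ∀ j : Option α, |G j - M| ≤ 2 * D := by
    intro j
    have hrw : G j - M = (∑ k : Option α, (G j - G k)) / (Fintype.card (Option α) : ℝ) := by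
      rw [Finset.sum_sub_distrib, Finset.sum_const, Finset.card_univ, nsmul_eq_mul, hMdef]
      field_simp
    rw [hrw, abs_div, abs_of_pos hco0, div_le_iff₀ hco0]
    calc |∑ k : Option α, (G j - G k)| ≤ ∑ k : Option α, |G j - G k| :=
          Finset.abs_sum_le_sum_abs _ _
      _ ≤ ∑ _k : Option α, 2 * D := Finset.sum_le_sum fun k _ => hGdev j k
      _ = 2 * D * (Fintype.card (Option α) : ℝ) := by
          rw [Finset.sum_const, Finset.card_univ, nsmul_eq_mul]; ring
  have hIH2 : ∀ j : Option α,
      ∑ σ : Equiv.Perm α, Real.exp (l * f (Equiv.swap none j * σ.optionCongr))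
        ≤ N * Real.exp (l * G j + 3 * (Fintype.card α : ℝ) * l ^ 2 * D ^ 2) := by
    intro j
    simpa only [hGdef] using hIH j
  have havg : ∑ j : Option α, Real.exp (l * G j)
      ≤ (Fintype.card (Option α) : ℝ) * Real.exp (l * M + 3/4 * (|l| * (2 * D))^2) := by
    apply sum_exp_le (fun j => l * G j) (l * M) (|l| * (2 * D)) hl
    · have h0 : (∑ j : Option α, G j) - (Fintype.card (Option α) : ℝ) * M = 0 := by
        rw [hMdef]; field_simp; simp
      calc ∑ j : Option α, (l * G j - l * M)
          = l * ((∑ j : Option α, G j) - (Fintype.card (Option α) : ℝ) * M) := by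
            rw [Finset.sum_sub_distrib, Finset.sum_const, Finset.card_univ, nsmul_eq_mul,
              ← Finset.mul_sum]
            ring
        _ = 0 := by rw [h0, mul_zero]
    · intro j
      rw [← mul_sub, abs_mul]
      exact mul_le_mul_of_nonneg_left (hGM j) (abs_nonneg l)
  have hsq : (3:ℝ)/4 * (|l| * (2 * D))^2 = 3 * l^2 * D^2 := by
    rw [mul_pow, sq_abs]; ring
  have hM2 : M = (∑ p : Equiv.Perm (Option α), f p) / ((Fintype.card (Option α) : ℝ) * N) := by
    rw [hMdef]
    simp only [hGdef]
    rw [← Finset.sum_div, ← hsum f, div_div]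
    ring_nf
  have hmulexp : ∀ a b : ℝ, N * Real.exp a * ((Fintype.card (Option α) : ℝ) * Real.exp b)
      = ((Fintype.card (Option α) : ℝ) * N) * Real.exp (a + b) := by
    intro a b; rw [Real.exp_add]; ring
  calc ∑ p : Equiv.Perm (Option α), Real.exp (l * f p)
      = ∑ j : Option α, ∑ σ : Equiv.Perm α, Real.exp (l * f (Equiv.swap none j * σ.optionCongr)) :=
        hsum _
    _ ≤ ∑ j : Option α, N * Real.exp (l * G j + 3 * (Fintype.card α : ℝ) * l ^ 2 * D ^ 2) :=
        Finset.sum_le_sum fun j _ => hIH2 j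
    _ = N * Real.exp (3 * (Fintype.card α : ℝ) * l ^ 2 * D ^ 2)
          * ∑ j : Option α, Real.exp (l * G j) := by
        rw [Finset.mul_sum]
        apply Finset.sum_congr rfl
        intro j _
        rw [Real.exp_add]; ring
    _ ≤ N * Real.exp (3 * (Fintype.card α : ℝ) * l ^ 2 * D ^ 2) *
          ((Fintype.card (Option α) : ℝ) * Real.exp (l * M + 3/4 * (|l| * (2 * D))^2)) :=
        mul_le_mul_of_nonneg_left havg (mul_nonneg hN.le (Real.exp_pos _).le)
    _ = (Fintype.card (Equiv.Perm (Option α)) : ℝ) *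
        Real.exp (l * ((∑ p : Equiv.Perm (Option α), f p)
            / (Fintype.card (Equiv.Perm (Option α)) : ℝ))
          + 3 * (Fintype.card (Option α) : ℝ) * l ^ 2 * D ^ 2) := by
        rw [hsq, hmulexp, hNo]
        congr 1
        rw [hM2, hco]
        ring

lemma mgfBound (α : Type) [Fintype α] : ∀ (inst : DecidableEq α), MgfBound α := by
  refine Fintype.induction_empty_option
    (P := fun α _ => ∀ (inst : DecidableEq α), @MgfBound α _ inst) ?_ ?_ ?_ α
  · intro α β _ e h instβ
    letI : Fintype α := Fintype.ofEquiv β e.symm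
    letI : DecidableEq α := Classical.decEq α
    exact mgf_transfer e (h _)
  · intro inst
    exact mgf_pempty
  · intro α _ h instO
    letI instα : DecidableEq α := Classical.decEq α
    have hE : instO = @Option.instDecidableEq α instα := deq_subsingleton _ _
    subst hE
    exact mgf_option α (h _)

lemma sum_ind {n : ℕ} (G : SimpleGraph (Fin n)) [DecidableRel G.Adj] (p : Equiv.Perm (Fin n)) :
    ∑ s : Fin n, ∑ t ∈ univ \ {s}, (if G.Adj (p s) (p t) then (1:ℝ) else 0)
      = 2 * G.edgeFinset.card := by
  have h1 : ∀ s : Fin n, ∑ t ∈ univ \ {s}, (if G.Adj (p s) (p t) then (1:ℝ) else 0)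
      = ∑ t, (if G.Adj (p s) (p t) then (1:ℝ) else 0) := by
    intro s
    apply Finset.sum_subset Finset.sdiff_subset
    intro t _ ht
    have hts : t = s := by
      by_contra hne
      exact ht (Finset.mem_sdiff.mpr ⟨Finset.mem_univ _, by simpa using hne⟩)
    subst hts
    simp
  calc ∑ s : Fin n, ∑ t ∈ univ \ {s}, (if G.Adj (p s) (p t) then (1:ℝ) else 0)
      = ∑ s : Fin n, ∑ t, (if G.Adj (p s) (p t) then (1:ℝ) else 0) :=
        Finset.sum_congr rfl fun s _ => h1 s
    _ = ∑ s : Fin n, ∑ y, (if G.Adj (p s) y then (1:ℝ) else 0) :=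
        Finset.sum_congr rfl fun s _ =>
          Equiv.sum_comp p (fun y => if G.Adj (p s) y then (1:ℝ) else 0)
    _ = ∑ x, ∑ y, (if G.Adj x y then (1:ℝ) else 0) :=
        Equiv.sum_comp p (fun x => ∑ y, (if G.Adj x y then (1:ℝ) else 0))
    _ = ∑ x, (G.degree x : ℝ) := by
        apply Finset.sum_congr rfl
        intro x _
        rw [Finset.sum_boole]
        norm_cast
        rw [show univ.filter (fun w => G.Adj x w) = G.neighborFinset x from
          (SimpleGraph.neighborFinset_eq_filter G).symm]
        exact SimpleGraph.card_neighborFinset_eq_degree _ _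
    _ = 2 * G.edgeFinset.card := by
        rw [← Nat.cast_sum, SimpleGraph.sum_degrees_eq_twice_card_edges]
        push_cast; ring

lemma S_invariant {n : ℕ} (G : SimpleGraph (Fin n)) [DecidableRel G.Adj]
    (s t s' t' : Fin n) (hst : s ≠ t) (hst' : s' ≠ t') :
    ∑ p : Equiv.Perm (Fin n), (if G.Adj (p s) (p t) then (1:ℝ) else 0)
      = ∑ p : Equiv.Perm (Fin n), (if G.Adj (p s') (p t') then (1:ℝ) else 0) := by
  set w := Equiv.swap s s' with hw
  set σ := Equiv.swap (w t) t' * w with hσ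
  have hws : w s = s' := Equiv.swap_apply_left s s'
  have hσs : σ s = s' := by
    rw [hσ, Equiv.Perm.mul_apply, hws]
    apply Equiv.swap_apply_of_ne_of_ne
    · intro h
      apply hst
      have h2 : w s' = w (w t) := by rw [h]
      rw [Equiv.swap_apply_right, Equiv.swap_apply_self] at h2
      exact h2
    · exact hst'
  have hσt : σ t = t' := by
    rw [hσ, Equiv.Perm.mul_apply]
    exact Equiv.swap_apply_left _ _
  have hre := Equiv.sum_comp (Equiv.mulRight σ)
    (fun p : Equiv.Perm (Fin n) => if G.Adj (p s) (p t) then (1:ℝ) else 0)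
  rw [← hre]
  apply Finset.sum_congr rfl
  intro q _
  simp only [Equiv.coe_mulRight, Equiv.Perm.mul_apply, hσs, hσt]

lemma sum_V {n : ℕ} (hn : 2 ≤ n) (G₁ G₂ : SimpleGraph (Fin n))
    [DecidableRel G₁.Adj] [DecidableRel G₂.Adj] :
    ∑ p : Equiv.Perm (Fin n), (∑ s : Fin n, ∑ t ∈ univ \ {s},
        (if G₁.Adj s t then (1:ℝ) else 0) * (if G₂.Adj (p s) (p t) then 1 else 0))
      = (Fintype.card (Equiv.Perm (Fin n)) : ℝ) *
          (4 * (G₁.edgeFinset.card : ℝ) * (G₂.edgeFinset.card : ℝ) / ((n:ℝ) * ((n:ℝ) - 1))) := by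
  have h0 : 0 < n := by omega
  set s₀ : Fin n := ⟨0, by omega⟩ with hs₀
  set t₀ : Fin n := ⟨1, by omega⟩ with ht₀
  have hst : s₀ ≠ t₀ := by simp [hs₀, ht₀, Fin.ext_iff]
  set C := ∑ p : Equiv.Perm (Fin n), (if G₂.Adj (p s₀) (p t₀) then (1:ℝ) else 0) with hC
  have hCst : ∀ s t : Fin n, s ≠ t →
      (∑ p : Equiv.Perm (Fin n), (if G₂.Adj (p s) (p t) then (1:ℝ) else 0)) = C :=
    fun s t h => S_invariant G₂ s t s₀ t₀ h hst
  have hmem : ∀ (s t : Fin n), t ∈ univ \ {s} → s ≠ t := by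
    intro s t ht
    have := (Finset.mem_sdiff.mp ht).2
    simp only [Finset.mem_singleton] at this
    exact fun h => this h.symm
  have h1 : ∑ p : Equiv.Perm (Fin n), (∑ s : Fin n, ∑ t ∈ univ \ {s},
        (if G₁.Adj s t then (1:ℝ) else 0) * (if G₂.Adj (p s) (p t) then 1 else 0))
      = ∑ s : Fin n, ∑ t ∈ univ \ {s}, (if G₁.Adj s t then (1:ℝ) else 0) * C := by
    rw [Finset.sum_comm]
    apply Finset.sum_congr rfl
    intro s _
    rw [Finset.sum_comm]
    apply Finset.sum_congr rfl
    intro t ht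
    rw [← Finset.mul_sum, hCst s t (hmem s t ht)]
  have h2 : ∑ s : Fin n, ∑ t ∈ univ \ {s}, (if G₁.Adj s t then (1:ℝ) else 0)
      = 2 * G₁.edgeFinset.card := by
    have := sum_ind G₁ (1 : Equiv.Perm (Fin n))
    simp only [Equiv.Perm.one_apply] at this
    exact this
  have h3 : ∑ s : Fin n, ∑ t ∈ univ \ {s}, (if G₁.Adj s t then (1:ℝ) else 0) * C
      = (∑ s : Fin n, ∑ t ∈ univ \ {s}, (if G₁.Adj s t then (1:ℝ) else 0)) * C := by
    rw [Finset.sum_mul]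
    apply Finset.sum_congr rfl
    intro s _
    rw [Finset.sum_mul]
  have hA : ∑ s : Fin n, ∑ t ∈ univ \ {s},
        (∑ p : Equiv.Perm (Fin n), (if G₂.Adj (p s) (p t) then (1:ℝ) else 0))
      = ((n:ℝ) * ((n:ℝ) - 1)) * C := by
    calc ∑ s : Fin n, ∑ t ∈ univ \ {s},
          (∑ p : Equiv.Perm (Fin n), (if G₂.Adj (p s) (p t) then (1:ℝ) else 0))
        = ∑ s : Fin n, ∑ _t ∈ univ \ {s}, C :=
          Finset.sum_congr rfl fun s _ => Finset.sum_congr rfl fun t ht => hCst s t (hmem s t ht)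
      _ = ∑ _s : Fin n, ((n - 1 : ℕ) : ℝ) * C := by
          apply Finset.sum_congr rfl
          intro s _
          rw [Finset.sum_const, Finset.card_univ_diff, nsmul_eq_mul]
          simp
      _ = ((n:ℝ) * ((n:ℝ) - 1)) * C := by
          rw [Finset.sum_const, Finset.card_univ, nsmul_eq_mul, Fintype.card_fin]
          rw [Nat.cast_sub (by omega : 1 ≤ n)]
          push_cast
          ring
  have hB : ∑ s : Fin n, ∑ t ∈ univ \ {s},
        (∑ p : Equiv.Perm (Fin n), (if G₂.Adj (p s) (p t) then (1:ℝ) else 0))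
      = (Fintype.card (Equiv.Perm (Fin n)) : ℝ) * (2 * G₂.edgeFinset.card) := by
    calc ∑ s : Fin n, ∑ t ∈ univ \ {s},
          (∑ p : Equiv.Perm (Fin n), (if G₂.Adj (p s) (p t) then (1:ℝ) else 0))
        = ∑ p : Equiv.Perm (Fin n), (∑ s : Fin n, ∑ t ∈ univ \ {s},
            (if G₂.Adj (p s) (p t) then (1:ℝ) else 0)) := by
          rw [Finset.sum_comm]
          apply Finset.sum_congr rfl
          intro s _
          rw [Finset.sum_comm]
      _ = ∑ _p : Equiv.Perm (Fin n), (2 * (G₂.edgeFinset.card : ℝ)) :=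
          Finset.sum_congr rfl fun p _ => sum_ind G₂ p
      _ = (Fintype.card (Equiv.Perm (Fin n)) : ℝ) * (2 * G₂.edgeFinset.card) := by
          rw [Finset.sum_const, Finset.card_univ, nsmul_eq_mul]
  have h4 : ((n:ℝ) * ((n:ℝ) - 1)) * C
      = (Fintype.card (Equiv.Perm (Fin n)) : ℝ) * (2 * G₂.edgeFinset.card) := by
    rw [← hA]; exact hB
  have hn2 : (2:ℝ) ≤ (n:ℝ) := by exact_mod_cast hn
  have hnn : ((n:ℝ) * ((n:ℝ) - 1)) ≠ 0 := by nlinarith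
  have hCval : C = ((Fintype.card (Equiv.Perm (Fin n)) : ℝ) * (2 * G₂.edgeFinset.card))
      / ((n:ℝ) * ((n:ℝ) - 1)) := by
    rw [eq_div_iff hnn]
    linear_combination h4
  rw [h1, h3, h2, hCval]
  ring

lemma ifbound (a b c : Prop) [Decidable a] [Decidable b] [Decidable c] :
    |(if a then (1:ℝ) else 0) * (if b then (1:ℝ) else 0)
      - (if a then (1:ℝ) else 0) * (if c then (1:ℝ) else 0)| ≤ 1 := by
  split_ifs <;> norm_num

lemma V_lip {n : ℕ} (G₁ G₂ : SimpleGraph (Fin n)) [DecidableRel G₁.Adj] [DecidableRel G₂.Adj]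
    (x y : Fin n) (p : Equiv.Perm (Fin n)) :
    |(∑ s : Fin n, ∑ t ∈ univ \ {s}, (if G₁.Adj s t then (1:ℝ) else 0) *
        (if G₂.Adj ((Equiv.swap x y * p) s) ((Equiv.swap x y * p) t) then 1 else 0))
      - (∑ s : Fin n, ∑ t ∈ univ \ {s}, (if G₁.Adj s t then (1:ℝ) else 0) *
        (if G₂.Adj (p s) (p t) then 1 else 0))| ≤ 4 * n := by
  have hrw : (∑ s : Fin n, ∑ t ∈ univ \ {s}, (if G₁.Adj s t then (1:ℝ) else 0) *
        (if G₂.Adj ((Equiv.swap x y * p) s) ((Equiv.swap x y * p) t) then 1 else 0))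
      - (∑ s : Fin n, ∑ t ∈ univ \ {s}, (if G₁.Adj s t then (1:ℝ) else 0) *
        (if G₂.Adj (p s) (p t) then 1 else 0))
      = ∑ s : Fin n, ∑ t ∈ univ \ {s},
          ((if G₁.Adj s t then (1:ℝ) else 0) *
            (if G₂.Adj (Equiv.swap x y (p s)) (Equiv.swap x y (p t)) then 1 else 0)
          - (if G₁.Adj s t then (1:ℝ) else 0) * (if G₂.Adj (p s) (p t) then 1 else 0)) := by
    rw [← Finset.sum_sub_distrib]
    apply Finset.sum_congr rfl
    intro s _
    rw [← Finset.sum_sub_distrib]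
    apply Finset.sum_congr rfl
    intro t _
    simp only [Equiv.Perm.mul_apply]
    rfl
  rw [hrw]
  have hpt : ∀ s t : Fin n,
      |(if G₁.Adj s t then (1:ℝ) else 0) *
          (if G₂.Adj (Equiv.swap x y (p s)) (Equiv.swap x y (p t)) then 1 else 0)
        - (if G₁.Adj s t then (1:ℝ) else 0) * (if G₂.Adj (p s) (p t) then 1 else 0)|
      ≤ (if p s = x then (1:ℝ) else 0) + (if p s = y then 1 else 0)
        + (if p t = x then 1 else 0) + (if p t = y then 1 else 0) := by
    intro s t
    by_cases c1 : p s = x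
    · refine le_trans (ifbound _ _ _) ?_
      rw [if_pos c1]
      split_ifs <;> norm_num
    by_cases c2 : p s = y
    · refine le_trans (ifbound _ _ _) ?_
      rw [if_pos c2]
      split_ifs <;> norm_num
    by_cases c3 : p t = x
    · refine le_trans (ifbound _ _ _) ?_
      rw [if_pos c3]
      split_ifs <;> norm_num
    by_cases c4 : p t = y
    · refine le_trans (ifbound _ _ _) ?_
      rw [if_pos c4]
      split_ifs <;> norm_num
    rw [Equiv.swap_apply_of_ne_of_ne c1 c2, Equiv.swap_apply_of_ne_of_ne c3 c4,
      sub_self, abs_zero]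
    split_ifs <;> norm_num
  have hone : ∀ z : Fin n, ∑ s : Fin n, (if p s = z then (1:ℝ) else 0) = 1 := by
    intro z
    rw [Equiv.sum_comp p (fun u => if u = z then (1:ℝ) else 0)]
    rw [Finset.sum_ite_eq' univ z (fun _ => (1:ℝ))]
    simp
  calc |∑ s : Fin n, ∑ t ∈ univ \ {s},
        ((if G₁.Adj s t then (1:ℝ) else 0) *
          (if G₂.Adj (Equiv.swap x y (p s)) (Equiv.swap x y (p t)) then 1 else 0)
        - (if G₁.Adj s t then (1:ℝ) else 0) * (if G₂.Adj (p s) (p t) then 1 else 0))|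
      ≤ ∑ s : Fin n, |∑ t ∈ univ \ {s},
        ((if G₁.Adj s t then (1:ℝ) else 0) *
          (if G₂.Adj (Equiv.swap x y (p s)) (Equiv.swap x y (p t)) then 1 else 0)
        - (if G₁.Adj s t then (1:ℝ) else 0) * (if G₂.Adj (p s) (p t) then 1 else 0))| :=
        Finset.abs_sum_le_sum_abs _ _
    _ ≤ ∑ s : Fin n, ∑ t ∈ univ \ {s},
        |(if G₁.Adj s t then (1:ℝ) else 0) *
          (if G₂.Adj (Equiv.swap x y (p s)) (Equiv.swap x y (p t)) then 1 else 0)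
        - (if G₁.Adj s t then (1:ℝ) else 0) * (if G₂.Adj (p s) (p t) then 1 else 0)| :=
        Finset.sum_le_sum fun s _ => Finset.abs_sum_le_sum_abs _ _
    _ ≤ ∑ s : Fin n, ∑ t ∈ univ \ {s},
        ((if p s = x then (1:ℝ) else 0) + (if p s = y then 1 else 0)
          + (if p t = x then 1 else 0) + (if p t = y then 1 else 0)) :=
        Finset.sum_le_sum fun s _ => Finset.sum_le_sum fun t _ => hpt s t
    _ ≤ ∑ s : Fin n, ∑ t : Fin n,
        ((if p s = x then (1:ℝ) else 0) + (if p s = y then 1 else 0)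
          + (if p t = x then 1 else 0) + (if p t = y then 1 else 0)) :=
        Finset.sum_le_sum fun s _ =>
          Finset.sum_le_sum_of_subset_of_nonneg Finset.sdiff_subset
            (fun t _ _ => by split_ifs <;> norm_num)
    _ = 4 * n := by
        have hc : ∀ s : Fin n, ∑ t : Fin n,
            ((if p s = x then (1:ℝ) else 0) + (if p s = y then 1 else 0)
              + (if p t = x then 1 else 0) + (if p t = y then 1 else 0))
            = (n:ℝ) * ((if p s = x then (1:ℝ) else 0) + (if p s = y then 1 else 0)) + 2 := by
          intro s
          rw [Finset.sum_add_distrib, Finset.sum_add_distrib, Finset.sum_add_distrib]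
          rw [Finset.sum_const, Finset.sum_const, Finset.card_univ, Fintype.card_fin,
            nsmul_eq_mul, nsmul_eq_mul, hone x, hone y]
          ring
        rw [Finset.sum_congr rfl fun s _ => hc s]
        rw [Finset.sum_add_distrib, Finset.sum_const, Finset.card_univ, Fintype.card_fin,
          ← Finset.mul_sum, Finset.sum_add_distrib, hone x, hone y, nsmul_eq_mul]
        ring

lemma tail_bound {n : ℕ} (hn : 1 ≤ n) (f : Equiv.Perm (Fin n) → ℝ)
    (hf : ∀ (x y : Fin n) (p : Equiv.Perm (Fin n)), |f (Equiv.swap x y * p) - f p| ≤ 4 * n)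
    (hrange : ∀ p, |f p - (∑ q, f q) / (Fintype.card (Equiv.Perm (Fin n)) : ℝ)| ≤ (n:ℝ)^2)
    (u : ℝ) (hu : 0 < u) :
    ((univ.filter fun p : Equiv.Perm (Fin n) =>
        u ≤ f p - (∑ q, f q) / (Fintype.card (Equiv.Perm (Fin n)) : ℝ)).card : ℝ) /
      (Fintype.card (Equiv.Perm (Fin n)) : ℝ)
    ≤ Real.exp (-(u^2 / (192 * (n:ℝ)^3))) := by
  have hN : (0:ℝ) < (Fintype.card (Equiv.Perm (Fin n)) : ℝ) := by
    exact_mod_cast (Fintype.card_pos : 0 < Fintype.card (Equiv.Perm (Fin n)))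
  set N := (Fintype.card (Equiv.Perm (Fin n)) : ℝ) with hNdef
  set μ := (∑ q, f q) / N with hμdef
  set S := univ.filter fun p : Equiv.Perm (Fin n) => u ≤ f p - μ with hSdef
  by_cases hS : S = ∅
  · rw [hS]
    simp only [Finset.card_empty, Nat.cast_zero, zero_div]
    exact (Real.exp_pos _).le
  obtain ⟨p₀, hp₀⟩ := Finset.nonempty_iff_ne_empty.mpr hS
  have hp₀' : u ≤ f p₀ - μ := (Finset.mem_filter.mp hp₀).2
  have hun : u ≤ (n:ℝ)^2 := le_trans hp₀' (le_trans (le_abs_self _) (hrange p₀))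
  have hn' : (1:ℝ) ≤ (n:ℝ) := by exact_mod_cast hn
  have hn0 : (0:ℝ) < (n:ℝ) := by linarith
  set l := u / (96 * (n:ℝ)^3) with hldef
  have hl0 : 0 < l := by positivity
  have habs : |l| * (2 * (4 * (n:ℝ))) ≤ 1 := by
    rw [abs_of_pos hl0, hldef, div_mul_eq_mul_div, div_le_one (by positivity)]
    nlinarith [hun, hn0, hu]
  have key := mgfBound (Fin n) inferInstance f (4*(n:ℝ)) l (by positivity) hf habs
  rw [Fintype.card_fin] at key
  have hlow : (S.card : ℝ) * Real.exp (l * (μ + u))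
      ≤ ∑ p : Equiv.Perm (Fin n), Real.exp (l * f p) := by
    calc (S.card : ℝ) * Real.exp (l * (μ + u))
        = ∑ _p ∈ S, Real.exp (l * (μ + u)) := by rw [Finset.sum_const, nsmul_eq_mul]
      _ ≤ ∑ p ∈ S, Real.exp (l * f p) := by
          apply Finset.sum_le_sum
          intro q hq
          apply Real.exp_le_exp.mpr
          have hq2 := (Finset.mem_filter.mp hq).2
          have : μ + u ≤ f q := by linarith
          exact mul_le_mul_of_nonneg_left this hl0.le
      _ ≤ ∑ p : Equiv.Perm (Fin n), Real.exp (l * f p) :=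
          Finset.sum_le_sum_of_subset_of_nonneg (Finset.filter_subset _ _)
            (fun q _ _ => (Real.exp_pos _).le)
  have hchain : (S.card : ℝ) * Real.exp (l * (μ + u))
      ≤ N * Real.exp (l * μ + 3*(n:ℝ)*l^2*(4*(n:ℝ))^2) := le_trans hlow key
  have hexp : Real.exp (l * μ + 3*(n:ℝ)*l^2*(4*(n:ℝ))^2) / Real.exp (l * (μ + u))
      = Real.exp (-(u^2 / (192 * (n:ℝ)^3))) := by
    rw [← Real.exp_sub]
    congr 1
    rw [hldef]
    have h3 : ((n:ℝ)^3) ≠ 0 := by positivity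
    field_simp
    ring
  rw [div_le_iff₀ hN]
  calc (S.card : ℝ)
      ≤ N * Real.exp (l * μ + 3*(n:ℝ)*l^2*(4*(n:ℝ))^2) / Real.exp (l * (μ + u)) := by
        rw [le_div_iff₀ (Real.exp_pos _)]
        exact hchain
    _ = N * (Real.exp (l * μ + 3*(n:ℝ)*l^2*(4*(n:ℝ))^2) / Real.exp (l * (μ + u))) := by
        rw [mul_div_assoc]
    _ = N * Real.exp (-(u^2 / (192 * (n:ℝ)^3))) := by rw [hexp]
    _ = Real.exp (-(u^2 / (192 * (n:ℝ)^3))) * N := by ring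


set_option maxHeartbeats 1000000

/-- Concentration for the random intersection of two graphs: with `π` uniform on `S_n`
and `V₁ = Σ_{s≠t} 1((s,t) ∈ E₁) 1((π(s),π(t)) ∈ E₂)`, the mean of `V₁` is
`4|E₁||E₂|/(n(n-1))` and `n^{-3/2}(V₁ - 4|E₁||E₂|/(n(n-1)))` has sub-Gaussian tails. -/
theorem graph_intersection_concentration (n : ℕ) (hn : 2 ≤ n)
    (G₁ G₂ : SimpleGraph (Fin n)) [DecidableRel G₁.Adj] [DecidableRel G₂.Adj]
    (V : Equiv.Perm (Fin n) → ℝ)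
    (hV : ∀ p : Equiv.Perm (Fin n),
      V p = ∑ s, ∑ t ∈ univ \ {s},
        (if G₁.Adj s t then (1 : ℝ) else 0) * (if G₂.Adj (p s) (p t) then 1 else 0))
    (t : ℝ) (ht : 0 < t) :
    (∑ p : Equiv.Perm (Fin n), V p) / (Fintype.card (Equiv.Perm (Fin n)))
        = 4 * (G₁.edgeFinset.card : ℝ) * (G₂.edgeFinset.card : ℝ) /
            ((n : ℝ) * ((n : ℝ) - 1)) ∧
    ((univ.filter (fun p : Equiv.Perm (Fin n) =>
          t ≤ ((n : ℝ) * Real.sqrt n)⁻¹ * (V p -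
            4 * (G₁.edgeFinset.card : ℝ) * (G₂.edgeFinset.card : ℝ) /
              ((n : ℝ) * ((n : ℝ) - 1))))).card : ℝ) /
        (Fintype.card (Equiv.Perm (Fin n)))
      ≤ Real.exp (-((n : ℝ) * t ^ 2 /
          (64 * (2 * (n : ℝ) - 1) * (6 + 4 / n + 1 / (n : ℝ) ^ 2)))) ∧
    ((univ.filter (fun p : Equiv.Perm (Fin n) =>
          ((n : ℝ) * Real.sqrt n)⁻¹ * (V p -
            4 * (G₁.edgeFinset.card : ℝ) * (G₂.edgeFinset.card : ℝ) /
              ((n : ℝ) * ((n : ℝ) - 1))) ≤ -t)).card : ℝ) /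
        (Fintype.card (Equiv.Perm (Fin n)))
      ≤ Real.exp (-((n : ℝ) * t ^ 2 /
          (64 * (2 * (n : ℝ) - 1) * (6 + 4 / n + 1 / (n : ℝ) ^ 2)))) := by
  have hn1 : 1 ≤ n := by omega
  have hn0 : (0:ℝ) < (n:ℝ) := by exact_mod_cast (by omega : 0 < n)
  have hn2' : (2:ℝ) ≤ (n:ℝ) := by exact_mod_cast hn
  have hN : (0:ℝ) < (Fintype.card (Equiv.Perm (Fin n)) : ℝ) := by
    exact_mod_cast (Fintype.card_pos : 0 < Fintype.card (Equiv.Perm (Fin n)))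
  set μ : ℝ := 4 * (G₁.edgeFinset.card : ℝ) * (G₂.edgeFinset.card : ℝ) /
      ((n : ℝ) * ((n : ℝ) - 1)) with hμdef
  have hsumV : ∑ p : Equiv.Perm (Fin n), V p
      = (Fintype.card (Equiv.Perm (Fin n)) : ℝ) * μ := by
    rw [Finset.sum_congr rfl fun p _ => hV p, hμdef]
    exact sum_V hn G₁ G₂
  have hmean : (∑ p : Equiv.Perm (Fin n), V p) / (Fintype.card (Equiv.Perm (Fin n)) : ℝ) = μ := by
    rw [hsumV]
    field_simp
  have hV0 : ∀ p, 0 ≤ V p := by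
    intro p
    rw [hV]
    apply Finset.sum_nonneg
    intro s _
    apply Finset.sum_nonneg
    intro r _
    split_ifs <;> norm_num
  have hVub : ∀ p, V p ≤ (n:ℝ)^2 := by
    intro p
    rw [hV]
    calc ∑ s : Fin n, ∑ r ∈ univ \ {s},
          (if G₁.Adj s r then (1:ℝ) else 0) * (if G₂.Adj (p s) (p r) then 1 else 0)
        ≤ ∑ s : Fin n, ∑ r ∈ univ \ {s}, (1:ℝ) :=
          Finset.sum_le_sum fun s _ => Finset.sum_le_sum fun r _ => by split_ifs <;> norm_num
      _ ≤ ∑ _s : Fin n, ∑ _r : Fin n, (1:ℝ) :=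
          Finset.sum_le_sum fun s _ =>
            Finset.sum_le_sum_of_subset_of_nonneg Finset.sdiff_subset
              (fun _ _ _ => zero_le_one)
      _ = (n:ℝ)^2 := by
          simp [Finset.sum_const, Finset.card_univ]
          ring
  have hμ1 : 0 ≤ μ := by
    rw [← hmean]
    exact div_nonneg (Finset.sum_nonneg fun p _ => hV0 p) hN.le
  have hμ2 : μ ≤ (n:ℝ)^2 := by
    rw [← hmean, div_le_iff₀ hN]
    calc ∑ p : Equiv.Perm (Fin n), V p
        ≤ ∑ _p : Equiv.Perm (Fin n), (n:ℝ)^2 := Finset.sum_le_sum fun p _ => hVub p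
      _ = (Fintype.card (Equiv.Perm (Fin n)) : ℝ) * (n:ℝ)^2 := by
          rw [Finset.sum_const, Finset.card_univ, nsmul_eq_mul]
      _ = (n:ℝ)^2 * (Fintype.card (Equiv.Perm (Fin n)) : ℝ) := by ring
  have hVlip : ∀ (x y : Fin n) (p : Equiv.Perm (Fin n)),
      |V (Equiv.swap x y * p) - V p| ≤ 4 * (n:ℝ) := by
    intro x y p
    simp only [hV]
    exact V_lip G₁ G₂ x y p
  have hrange : ∀ p, |V p - μ| ≤ (n:ℝ)^2 := fun p =>
    abs_le.mpr ⟨by linarith [hV0 p, hμ2], by linarith [hVub p, hμ1]⟩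
  have hs0 : (0:ℝ) < Real.sqrt n := Real.sqrt_pos.mpr hn0
  have hns : (0:ℝ) < (n:ℝ) * Real.sqrt n := mul_pos hn0 hs0
  set u : ℝ := t * ((n:ℝ) * Real.sqrt n) with hu
  have hu0 : 0 < u := mul_pos ht hns
  have hu2 : u^2 / (192*(n:ℝ)^3) = t^2 / 192 := by
    rw [hu, mul_pow, mul_pow, Real.sq_sqrt hn0.le]
    have h3 : ((n:ℝ))^3 ≠ 0 := by positivity
    field_simp
  have hq : (6:ℝ) ≤ 6 + 4/(n:ℝ) + 1/(n:ℝ)^2 := by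
    have h1 : (0:ℝ) ≤ 4/(n:ℝ) := by positivity
    have h2 : (0:ℝ) ≤ 1/(n:ℝ)^2 := by positivity
    linarith
  have h2n : (0:ℝ) < 2*(n:ℝ)-1 := by linarith
  have hfinal : Real.exp (-(u^2 / (192 * (n:ℝ)^3)))
      ≤ Real.exp (-((n : ℝ) * t ^ 2 /
          (64 * (2 * (n : ℝ) - 1) * (6 + 4 / (n:ℝ) + 1 / (n : ℝ) ^ 2)))) := by
    apply Real.exp_le_exp.mpr
    rw [hu2, neg_le_neg_iff]
    have hd : (0:ℝ) < 64 * (2*(n:ℝ)-1) * (6 + 4/(n:ℝ) + 1/(n:ℝ)^2) := by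
      apply mul_pos (by linarith : (0:ℝ) < 64 * (2*(n:ℝ)-1))
      linarith
    rw [div_le_div_iff₀ hd (by norm_num : (0:ℝ) < 192)]
    have ht2 : 0 ≤ t^2 := sq_nonneg t
    nlinarith [mul_le_mul_of_nonneg_left hq
        (mul_nonneg (mul_nonneg (by norm_num : (0:ℝ) ≤ 64) h2n.le) ht2)]
  refine ⟨hmean, ?_, ?_⟩
  · -- upper tail
    have hup := tail_bound hn1 V hVlip
      (fun p => by rw [hmean]; exact hrange p) u hu0
    have hset : (univ.filter (fun p : Equiv.Perm (Fin n) =>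
          t ≤ ((n : ℝ) * Real.sqrt n)⁻¹ * (V p - μ)))
        = (univ.filter fun p : Equiv.Perm (Fin n) =>
          u ≤ V p - (∑ q, V q) / (Fintype.card (Equiv.Perm (Fin n)) : ℝ)) := by
      apply Finset.filter_congr
      intro p _
      rw [hmean, inv_mul_eq_div, le_div_iff₀ hns, ← hu]
    rw [hset]
    exact le_trans hup hfinal
  · -- lower tail
    have hVlip' : ∀ (x y : Fin n) (p : Equiv.Perm (Fin n)),
        |(fun q => -V q) (Equiv.swap x y * p) - (fun q => -V q) p| ≤ 4 * (n:ℝ) := by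
      intro x y p
      simp only
      rw [show -V (Equiv.swap x y * p) - -V p = -(V (Equiv.swap x y * p) - V p) by ring,
        abs_neg]
      exact hVlip x y p
    have hmean2 : (∑ q : Equiv.Perm (Fin n), -V q) / (Fintype.card (Equiv.Perm (Fin n)) : ℝ)
        = -μ := by
      rw [Finset.sum_neg_distrib, neg_div, hmean]
    have hlow := tail_bound hn1 (fun q => -V q) hVlip'
      (fun p => by
        rw [hmean2, show -V p - -μ = -(V p - μ) by ring, abs_neg]
        exact hrange p) u hu0
    have hset : (univ.filter (fun p : Equiv.Perm (Fin n) =>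
          ((n : ℝ) * Real.sqrt n)⁻¹ * (V p - μ) ≤ -t))
        = (univ.filter fun p : Equiv.Perm (Fin n) =>
          u ≤ (fun q => -V q) p
            - (∑ q, (fun q => -V q) q) / (Fintype.card (Equiv.Perm (Fin n)) : ℝ)) := by
      apply Finset.filter_congr
      intro p _
      simp only
      rw [hmean2, inv_mul_eq_div, div_le_iff₀ hns, hu]
      constructor <;> intro h <;> nlinarith
    rw [hset]
    exact le_trans hlow hfinal
end

section
/- Let W ∈ ℝ^k be a random vector with nonnegative coordinates, mean vector μ ≻ 0, and for each i let W^i be the W-size biased vector in direction i, satisfying E(W_i f(W)) = μ_i E(f(W^i)). If ‖W − W^i‖₂ ≤ K almost surely for each i, then for all θ with ‖θ‖₂ < 2/K, ∂m(θ)/∂θ_i ≤ μ_i (2 + K‖θ‖₂)/(2 − K‖θ‖₂) · m(θ), where m(θ) = E(e^{θᵗW}). -/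
open MeasureTheory Matrix

/-- The Euclidean (ℓ²) norm on `Fin k → ℝ`. -/
noncomputable def norm2 {k : ℕ} (x : Fin k → ℝ) : ℝ := Real.sqrt (∑ i, x i ^ 2)

lemma exp_mul_le {y : ℝ} (h0 : 0 ≤ y) (h2 : y < 2) : Real.exp y * (2 - y) ≤ 2 + y := by
  have hg : ∀ x : ℝ, HasDerivAt (fun x => (2 + x) - Real.exp x * (2 - x))
      (1 + Real.exp x * (x - 1)) x := by
    intro x
    have h1 : HasDerivAt (fun x : ℝ => 2 + x) 1 x := by
      simpa using (hasDerivAt_id x).const_add 2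
    have h2 : HasDerivAt (fun x : ℝ => Real.exp x * (2 - x))
        (Real.exp x * (2 - x) + Real.exp x * (-1)) x :=
      (Real.hasDerivAt_exp x).mul (by simpa using (hasDerivAt_id x).const_sub 2)
    have := h1.sub h2
    refine this.congr_deriv ?_
    ring
  have hd' : ∀ x : ℝ, 0 ≤ x → 0 ≤ 1 + Real.exp x * (x - 1) := by
    intro x hx
    have h1 : Real.exp x * Real.exp (-x) = 1 := by
      rw [← Real.exp_add]; simp
    have h2 : 1 - x ≤ Real.exp (-x) := by
      have := Real.add_one_le_exp (-x); linarith
    nlinarith [Real.exp_pos x]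
  have hmono : MonotoneOn (fun x => (2 + x) - Real.exp x * (2 - x)) (Set.Icc 0 2) := by
    apply monotoneOn_of_deriv_nonneg (convex_Icc 0 2)
    · exact Continuous.continuousOn (by continuity)
    · intro x hx
      exact (hg x).differentiableAt.differentiableWithinAt
    · intro x hx
      rw [(hg x).deriv]
      rw [interior_Icc, Set.mem_Ioo] at hx
      exact hd' x hx.1.le
  have := hmono (Set.mem_Icc.2 ⟨le_refl 0, by norm_num⟩) (Set.mem_Icc.2 ⟨h0, h2.le⟩) h0
  simp only [Real.exp_zero] at this
  linarith

lemma exp_le_ratio {y : ℝ} (h0 : 0 ≤ y) (h2 : y < 2) : Real.exp y ≤ (2 + y) / (2 - y) := by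
  rw [le_div_iff₀ (by linarith)]
  exact exp_mul_le h0 h2

lemma abs_dot_le {k : ℕ} (θ v : Fin k → ℝ) : |θ ⬝ᵥ v| ≤ norm2 θ * norm2 v := by
  rw [abs_le]
  constructor
  · have h := Real.sum_mul_le_sqrt_mul_sqrt Finset.univ (fun j => -(θ j)) v
    have e1 : ∑ j, -(θ j) * v j = -(∑ j, θ j * v j) := by
      rw [← Finset.sum_neg_distrib]
      exact Finset.sum_congr rfl fun j _ => by ring
    have e2 : ∑ j, (-(θ j)) ^ 2 = ∑ j, θ j ^ 2 :=
      Finset.sum_congr rfl fun j _ => by ring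
    rw [e1, e2] at h
    simp only [norm2, dotProduct]
    linarith [h]
  · have h := Real.sum_mul_le_sqrt_mul_sqrt Finset.univ θ v
    simpa [dotProduct, norm2] using h

/-- Size-bias gradient bound: if `W` has nonnegative coordinates, `W^i` is the
direction-`i` size biased version of `W`, and `‖W - W^i‖₂ ≤ K` a.s. for each `i`,
then for `‖θ‖₂ < 2/K`,
`∂m(θ)/∂θ_i = E(W_i e^{θᵗW}) ≤ μ_i (2 + K‖θ‖₂)/(2 - K‖θ‖₂) m(θ)`. -/
theorem size_bias_partial_deriv_bound
    {Ω : Type*} [MeasurableSpace Ω] (μ : Measure Ω) [IsProbabilityMeasure μ]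
    {k : ℕ} (W : Ω → Fin k → ℝ) (Ws : Fin k → Ω → Fin k → ℝ)
    (hpos : ∀ ω i, 0 ≤ W ω i)
    (μv : Fin k → ℝ) (hμv : ∀ i, μv i = ∫ ω, W ω i ∂μ) (hμpos : ∀ i, 0 < μv i)
    (hsb : ∀ (i : Fin k) (f : (Fin k → ℝ) → ℝ),
      Integrable (fun ω => W ω i * f (W ω)) μ → Integrable (fun ω => f (Ws i ω)) μ →
      ∫ ω, W ω i * f (W ω) ∂μ = μv i * ∫ ω, f (Ws i ω) ∂μ)
    (K : ℝ) (hKpos : 0 < K)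
    (hK : ∀ i, ∀ᵐ ω ∂μ, norm2 (fun j => W ω j - Ws i ω j) ≤ K)
    (hint : ∀ θ : Fin k → ℝ, Integrable (fun ω => Real.exp (θ ⬝ᵥ W ω)) μ)
    (hint' : ∀ (i : Fin k) (θ : Fin k → ℝ),
      Integrable (fun ω => Real.exp (θ ⬝ᵥ Ws i ω)) μ)
    (hint'' : ∀ (i : Fin k) (θ : Fin k → ℝ),
      Integrable (fun ω => W ω i * Real.exp (θ ⬝ᵥ W ω)) μ)
    (θ : Fin k → ℝ) (hθ : norm2 θ < 2 / K) (i : Fin k) :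
    ∫ ω, W ω i * Real.exp (θ ⬝ᵥ W ω) ∂μ
      ≤ μv i * ((2 + K * norm2 θ) / (2 - K * norm2 θ)) *
          ∫ ω, Real.exp (θ ⬝ᵥ W ω) ∂μ := by
  set t := norm2 θ with ht
  have ht0 : 0 ≤ t := Real.sqrt_nonneg _
  have hKt : K * t < 2 := by
    rw [lt_div_iff₀ hKpos] at hθ; linarith [hθ]
  have hKt0 : 0 ≤ K * t := mul_nonneg hKpos.le ht0
  have hKt2 : 0 < 2 - K * t := by linarith
  set C := (2 + K * t) / (2 - K * t) with hC
  rw [hsb i (fun x => Real.exp (θ ⬝ᵥ x)) (hint'' i θ) (hint' i θ), mul_assoc]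
  apply mul_le_mul_of_nonneg_left _ (hμpos i).le
  have key : ∀ᵐ ω ∂μ, Real.exp (θ ⬝ᵥ Ws i ω) ≤ C * Real.exp (θ ⬝ᵥ W ω) := by
    filter_upwards [hK i] with ω hω
    have hdot : θ ⬝ᵥ Ws i ω = θ ⬝ᵥ W ω + (- (θ ⬝ᵥ fun j => W ω j - Ws i ω j)) := by
      simp only [dotProduct, mul_sub, Finset.sum_sub_distrib]
      ring
    have hcs : |θ ⬝ᵥ fun j => W ω j - Ws i ω j| ≤ t * K := by
      calc |θ ⬝ᵥ fun j => W ω j - Ws i ω j|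
          ≤ t * norm2 (fun j => W ω j - Ws i ω j) := abs_dot_le θ _
        _ ≤ t * K := by
            apply mul_le_mul_of_nonneg_left hω ht0
    have hle : - (θ ⬝ᵥ fun j => W ω j - Ws i ω j) ≤ K * t := by
      have := neg_le_of_abs_le hcs
      linarith [this]
    calc Real.exp (θ ⬝ᵥ Ws i ω)
        = Real.exp (θ ⬝ᵥ W ω) * Real.exp (- (θ ⬝ᵥ fun j => W ω j - Ws i ω j)) := by
          rw [hdot, Real.exp_add]
      _ ≤ Real.exp (θ ⬝ᵥ W ω) * C := by
          apply mul_le_mul_of_nonneg_left _ (Real.exp_pos _).le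
          exact (Real.exp_le_exp.2 hle).trans (exp_le_ratio hKt0 hKt)
      _ = C * Real.exp (θ ⬝ᵥ W ω) := mul_comm _ _
  calc ∫ ω, Real.exp (θ ⬝ᵥ Ws i ω) ∂μ
      ≤ ∫ ω, C * Real.exp (θ ⬝ᵥ W ω) ∂μ :=
        integral_mono_ae (hint' i θ) ((hint θ).const_mul C) key
    _ = C * ∫ ω, Real.exp (θ ⬝ᵥ W ω) ∂μ := integral_const_mul _ _
end

section
/- Let W = (W₁,…,W_k) be a random vector with nonnegative coordinates, mean μ ≻ 0, standard deviations σ ≻ 0, and suppose ‖W − W^i‖₂ ≤ K for each direction-i size biased vector W^i, i = 1,…,k. Let σ_(1) = min_i σ_i, K₁ = (2K/σ_(1)) ‖μ/σ‖₂, K₂ = K/(2σ_(1)), where μ/σ denotes coordinatewise division. Then for every t ∈ ℝ^k with t ⪰ 0, P((W − μ)/σ ⪰ t) ≤ exp(−‖t‖₂² / (2(K₁ + K₂‖t‖₂))). -/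
open MeasureTheory Matrix

lemma norm2_nonneg {k : ℕ} (x : Fin k → ℝ) : 0 ≤ norm2 x := Real.sqrt_nonneg _

lemma sq_norm2 {k : ℕ} (x : Fin k → ℝ) : norm2 x ^ 2 = ∑ i, x i ^ 2 :=
  Real.sq_sqrt (Finset.sum_nonneg fun _ _ => sq_nonneg _)

lemma dot_le_norm2 {k : ℕ} (u v : Fin k → ℝ) : u ⬝ᵥ v ≤ norm2 u * norm2 v := by
  have h := Finset.sum_mul_sq_le_sq_mul_sq Finset.univ u v
  have h1 : 0 ≤ norm2 u * norm2 v := mul_nonneg (norm2_nonneg u) (norm2_nonneg v)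
  have h2 : (norm2 u * norm2 v) ^ 2 = (∑ i, u i ^ 2) * (∑ i, v i ^ 2) := by
    rw [mul_pow, sq_norm2, sq_norm2]
  have h3 : (u ⬝ᵥ v) ^ 2 ≤ (norm2 u * norm2 v) ^ 2 := by
    rw [h2]; exact h
  nlinarith [h3, h1]

lemma neg_norm2_le_dot {k : ℕ} (u v : Fin k → ℝ) : -(norm2 u * norm2 v) ≤ u ⬝ᵥ v := by
  have h := dot_le_norm2 u (fun i => -(v i))
  have h2 : u ⬝ᵥ (fun i => -(v i)) = -(u ⬝ᵥ v) := by
    simp [dotProduct]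
  have h3 : norm2 (fun i => -(v i)) = norm2 v := by simp [norm2]
  rw [h2, h3] at h
  linarith

/-- `(e^x - 1 - x)(1 - x/3) ≤ x²/2` for `x ≥ 0`. -/
lemma exp_taylor_ineq {x : ℝ} (hx : 0 ≤ x) :
    (Real.exp x - 1 - x) * (1 - x / 3) ≤ x ^ 2 / 2 := by
  set D1 : ℝ → ℝ := fun y =>
    y - ((Real.exp y - 1) * (1 - y / 3) + (Real.exp y - 1 - y) * (-(1 / 3))) with hD1def
  have hf : ∀ y : ℝ, HasDerivAt (fun y => Real.exp y - 1 - y) (Real.exp y - 1) y := by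
    intro y
    exact ((Real.hasDerivAt_exp y).sub_const 1).sub (hasDerivAt_id y)
  have hg : ∀ y : ℝ, HasDerivAt (fun y => 1 - y / 3) (-(1 / 3)) y := by
    intro y
    simpa using ((hasDerivAt_id y).div_const 3).const_sub 1
  have hψ : ∀ y : ℝ, HasDerivAt
      (fun y => y ^ 2 / 2 - (Real.exp y - 1 - y) * (1 - y / 3)) (D1 y) y := by
    intro y
    have h1 : HasDerivAt (fun y : ℝ => y ^ 2 / 2) y y := by
      simpa using (hasDerivAt_pow 2 y).div_const 2
    exact h1.sub ((hf y).mul (hg y))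
  have hD1' : ∀ y : ℝ, HasDerivAt D1
      (1 - ((Real.exp y) * (1 - y / 3) + (Real.exp y - 1) * (-(1 / 3))
        + ((Real.exp y - 1) * (-(1 / 3))))) y := by
    intro y
    have h1 : HasDerivAt (fun y => (Real.exp y - 1) * (1 - y / 3))
        ((Real.exp y) * (1 - y / 3) + (Real.exp y - 1) * (-(1 / 3))) y :=
      ((Real.hasDerivAt_exp y).sub_const 1).mul (hg y)
    have h2 : HasDerivAt (fun y => (Real.exp y - 1 - y) * (-(1 / 3)))
        ((Real.exp y - 1) * (-(1 / 3))) y := (hf y).mul_const _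
    rw [hD1def]
    exact (hasDerivAt_id y).sub (h1.add h2)
  have hD1mono : Monotone D1 := by
    apply monotone_of_deriv_nonneg (fun y => (hD1' y).differentiableAt)
    intro y
    rw [(hD1' y).deriv]
    have hkey : (1 - y) * Real.exp y ≤ 1 := by
      have h := Real.add_one_le_exp (-y)
      rw [Real.exp_neg] at h
      have hpos := Real.exp_pos y
      have h2 : (Real.exp y)⁻¹ * Real.exp y = 1 := inv_mul_cancel₀ (ne_of_gt hpos)
      nlinarith
    nlinarith
  have hD10 : D1 0 = 0 := by simp [hD1def]
  have hD1nonneg : ∀ y : ℝ, 0 ≤ y → 0 ≤ D1 y := fun y hy => hD10 ▸ hD1mono hy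
  have hψmono : MonotoneOn (fun y => y ^ 2 / 2 - (Real.exp y - 1 - y) * (1 - y / 3))
      (Set.Ici (0 : ℝ)) := by
    apply monotoneOn_of_deriv_nonneg (convex_Ici 0)
    · exact (Differentiable.continuous (fun y => (hψ y).differentiableAt)).continuousOn
    · exact Differentiable.differentiableOn (fun y => (hψ y).differentiableAt)
    · intro y hy
      rw [(hψ y).deriv]
      exact hD1nonneg y (le_of_lt (by simpa using hy))
  have h0 : (fun y : ℝ => y ^ 2 / 2 - (Real.exp y - 1 - y) * (1 - y / 3)) 0 = 0 := by
    norm_num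
  have := hψmono (Set.self_mem_Ici) (Set.mem_Ici.2 hx) hx
  rw [h0] at this
  linarith

lemma exponent_bound {A B T K1 K2 : ℝ} (hA : 0 < A) (hB : 0 < B) (hT : 0 < T)
    (hK1 : 0 ≤ K1) (hK2 : 0 < K2) (hAB : A * B ≤ K1 * T ^ 2 / 2) (hB2 : B ≤ 2 * K2 * T) :
    A * (Real.exp (T ^ 2 / (A * B + B * T ^ 2 / 3) * B) - 1) / B
      - T ^ 2 / (A * B + B * T ^ 2 / 3) * (A + T ^ 2)
      ≤ -(T ^ 2 / (2 * (K1 + K2 * T))) := by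
  have hdpos : 0 < A * B + B * T ^ 2 / 3 := by positivity
  set d := A * B + B * T ^ 2 / 3 with hd
  set s := T ^ 2 / d with hs
  have hspos : 0 < s := by positivity
  have hsd : s * d = T ^ 2 := by
    rw [hs]; field_simp
  have hx : 0 ≤ s * B := by positivity
  have h13 : 1 - s * B / 3 = A * B / d := by
    rw [hs]; field_simp; ring
  have htay := exp_taylor_ineq hx
  rw [h13] at htay
  have hABd : 0 < A * B / d := by positivity
  set E := Real.exp (s * B) with hE
  have hE1 : E - 1 - s * B ≤ s ^ 2 * B * d / (2 * A) := by
    have h2 : E - 1 - s * B ≤ (s * B) ^ 2 / 2 / (A * B / d) := (le_div_iff₀ hABd).2 htay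
    have h3 : (s * B) ^ 2 / 2 / (A * B / d) = s ^ 2 * B * d / (2 * A) := by
      field_simp
    linarith [h3 ▸ h2]
  have hid : A * (E - 1) / B - s * (A + T ^ 2) = (A / B) * (E - 1 - s * B) - s * T ^ 2 := by
    field_simp; ring
  have hstep : (A / B) * (E - 1 - s * B) ≤ s ^ 2 * d / 2 := by
    have := mul_le_mul_of_nonneg_left hE1 (le_of_lt (div_pos hA hB))
    calc (A / B) * (E - 1 - s * B) ≤ (A / B) * (s ^ 2 * B * d / (2 * A)) := this
      _ = s ^ 2 * d / 2 := by field_simp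
  have hval : s ^ 2 * d / 2 - s * T ^ 2 = -(T ^ 2 * T ^ 2 / (2 * d)) := by
    rw [hs]; field_simp; ring
  have hDpos : 0 < K1 + K2 * T := by positivity
  have hdle : d ≤ T ^ 2 * (K1 + K2 * T) := by
    rw [hd]; nlinarith
  have hfin : T ^ 2 / (2 * (K1 + K2 * T)) ≤ T ^ 2 * T ^ 2 / (2 * d) := by
    rw [div_le_div_iff₀ (by positivity) (by positivity)]
    nlinarith
  calc A * (E - 1) / B - s * (A + T ^ 2)
      = (A / B) * (E - 1 - s * B) - s * T ^ 2 := hid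
    _ ≤ s ^ 2 * d / 2 - s * T ^ 2 := by linarith
    _ = -(T ^ 2 * T ^ 2 / (2 * d)) := hval
    _ ≤ -(T ^ 2 / (2 * (K1 + K2 * T))) := by linarith

lemma mgf_bound_s19 {Ω : Type*} [MeasurableSpace Ω] (μ : Measure Ω) [IsProbabilityMeasure μ]
    {k : ℕ} (W : Ω → Fin k → ℝ) (Ws : Fin k → Ω → Fin k → ℝ)
    (hpos : ∀ ω i, 0 ≤ W ω i)
    (μv : Fin k → ℝ) (hμnonneg : ∀ i, 0 ≤ μv i)
    (hsb : ∀ (i : Fin k) (f : (Fin k → ℝ) → ℝ),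
      Integrable (fun ω => W ω i * f (W ω)) μ → Integrable (fun ω => f (Ws i ω)) μ →
      ∫ ω, W ω i * f (W ω) ∂μ = μv i * ∫ ω, f (Ws i ω) ∂μ)
    (K : ℝ)
    (hK : ∀ i, ∀ᵐ ω ∂μ, norm2 (fun j => W ω j - Ws i ω j) ≤ K)
    (hint : ∀ θ : Fin k → ℝ, Integrable (fun ω => Real.exp (θ ⬝ᵥ W ω)) μ)
    (hint' : ∀ (i : Fin k) (θ : Fin k → ℝ),
      Integrable (fun ω => Real.exp (θ ⬝ᵥ Ws i ω)) μ)
    (hint'' : ∀ (i : Fin k) (θ : Fin k → ℝ),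
      Integrable (fun ω => W ω i * Real.exp (θ ⬝ᵥ W ω)) μ)
    (u : Fin k → ℝ) (hu : ∀ i, 0 ≤ u i) (hB : 0 < K * norm2 u)
    (s : ℝ) (hs : 0 ≤ s) :
    ∫ ω, Real.exp (s * (u ⬝ᵥ W ω)) ∂μ
      ≤ Real.exp ((u ⬝ᵥ μv) * (Real.exp (s * (K * norm2 u)) - 1) / (K * norm2 u)) := by
  set B : ℝ := K * norm2 u with hBdef
  set A : ℝ := u ⬝ᵥ μv with hAdef
  have hAnn : 0 ≤ A := Finset.sum_nonneg fun i _ => mul_nonneg (hu i) (hμnonneg i)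
  have hynn : ∀ ω, 0 ≤ u ⬝ᵥ W ω := fun ω =>
    Finset.sum_nonneg fun i _ => mul_nonneg (hu i) (hpos ω i)
  have hintm : ∀ r : ℝ, Integrable (fun ω => Real.exp (r * (u ⬝ᵥ W ω))) μ := by
    intro r
    simpa [smul_dotProduct, smul_eq_mul] using hint (r • u)
  have hintm'' : ∀ (r : ℝ) (i : Fin k),
      Integrable (fun ω => W ω i * Real.exp (r * (u ⬝ᵥ W ω))) μ := by
    intro r i
    simpa [smul_dotProduct, smul_eq_mul] using hint'' i (r • u)
  have hintm' : ∀ (i : Fin k) (r : ℝ),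
      Integrable (fun ω => Real.exp (r * (u ⬝ᵥ Ws i ω))) μ := by
    intro i r
    simpa [smul_dotProduct, smul_eq_mul] using hint' i (r • u)
  have hsum : ∀ r : ℝ, (fun ω => (u ⬝ᵥ W ω) * Real.exp (r * (u ⬝ᵥ W ω)))
      = fun ω => ∑ i, u i * (W ω i * Real.exp (r * (u ⬝ᵥ W ω))) := by
    intro r
    funext ω
    simp [dotProduct, Finset.sum_mul, mul_assoc]
  have hbig : ∀ r : ℝ, Integrable (fun ω => (u ⬝ᵥ W ω) * Real.exp (r * (u ⬝ᵥ W ω))) μ := by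
    intro r
    rw [hsum r]
    exact integrable_finset_sum _ fun i _ => (hintm'' r i).const_mul (u i)
  set m : ℝ → ℝ := fun r => ∫ ω, Real.exp (r * (u ⬝ᵥ W ω)) ∂μ with hmdef
  have hm_deriv : ∀ r : ℝ,
      HasDerivAt m (∫ ω, (u ⬝ᵥ W ω) * Real.exp (r * (u ⬝ᵥ W ω)) ∂μ) r := by
    intro r
    refine (hasDerivAt_integral_of_dominated_loc_of_deriv_le (s := Metric.ball r 1) (Metric.ball_mem_nhds r one_pos)
      (F := fun x ω => Real.exp (x * (u ⬝ᵥ W ω)))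
      (F' := fun x ω => (u ⬝ᵥ W ω) * Real.exp (x * (u ⬝ᵥ W ω)))
      (bound := fun ω => (u ⬝ᵥ W ω) * Real.exp ((|r| + 1) * (u ⬝ᵥ W ω)))
      ?_ ?_ ?_ ?_ ?_ ?_).2
    · exact Filter.Eventually.of_forall fun x => (hintm x).aestronglyMeasurable
    · exact hintm r
    · exact (hbig r).aestronglyMeasurable
    · refine Filter.Eventually.of_forall fun ω => ?_
      intro x hx
      rw [Metric.mem_ball, Real.dist_eq] at hx
      have hxle : x ≤ |r| + 1 := by
        have h1 := le_abs_self r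
        have h3 := le_abs_self (x - r)
        linarith
      rw [Real.norm_eq_abs, abs_of_nonneg (mul_nonneg (hynn ω) (Real.exp_pos _).le)]
      exact mul_le_mul_of_nonneg_left
        (Real.exp_le_exp.2 (mul_le_mul_of_nonneg_right hxle (hynn ω))) (hynn ω)
    · exact hbig (|r| + 1)
    · refine Filter.Eventually.of_forall fun ω => ?_
      intro x _
      simpa [mul_comm] using ((hasDerivAt_id x).mul_const (u ⬝ᵥ W ω)).exp
  have hODE : ∀ r : ℝ, 0 ≤ r →
      (∫ ω, (u ⬝ᵥ W ω) * Real.exp (r * (u ⬝ᵥ W ω)) ∂μ) ≤ A * Real.exp (r * B) * m r := by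
    intro r hr
    rw [hsum r, integral_finset_sum _ fun i _ => (hintm'' r i).const_mul (u i)]
    simp_rw [integral_const_mul]
    have hterm : ∀ i : Fin k, (∫ ω, W ω i * Real.exp (r * (u ⬝ᵥ W ω)) ∂μ)
        ≤ μv i * (Real.exp (r * B) * m r) := by
      intro i
      have heq : (∫ ω, W ω i * Real.exp (r * (u ⬝ᵥ W ω)) ∂μ)
          = μv i * ∫ ω, Real.exp (r * (u ⬝ᵥ Ws i ω)) ∂μ :=
        hsb i (fun x => Real.exp (r * (u ⬝ᵥ x))) (hintm'' r i) (hintm' i r)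
      rw [heq]
      refine mul_le_mul_of_nonneg_left ?_ (hμnonneg i)
      have hae : ∀ᵐ ω ∂μ, Real.exp (r * (u ⬝ᵥ Ws i ω))
          ≤ Real.exp (r * B) * Real.exp (r * (u ⬝ᵥ W ω)) := by
        refine (hK i).mono fun ω hω => ?_
        rw [← Real.exp_add]
        apply Real.exp_le_exp.2
        have hdot : u ⬝ᵥ Ws i ω
            = u ⬝ᵥ W ω - u ⬝ᵥ (fun j => W ω j - Ws i ω j) := by
          simp [dotProduct, mul_sub, Finset.sum_sub_distrib]
        have h1 := neg_norm2_le_dot u (fun j => W ω j - Ws i ω j)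
        have h2 : norm2 u * norm2 (fun j => W ω j - Ws i ω j) ≤ norm2 u * K :=
          mul_le_mul_of_nonneg_left hω (norm2_nonneg u)
        have h3 : u ⬝ᵥ Ws i ω ≤ u ⬝ᵥ W ω + norm2 u * K := by
          rw [hdot]; linarith
        have h4 := mul_le_mul_of_nonneg_left h3 hr
        rw [hBdef]
        nlinarith [h4]
      calc (∫ ω, Real.exp (r * (u ⬝ᵥ Ws i ω)) ∂μ)
          ≤ ∫ ω, Real.exp (r * B) * Real.exp (r * (u ⬝ᵥ W ω)) ∂μ :=
            integral_mono_ae (hintm' i r) ((hintm r).const_mul _) hae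
        _ = Real.exp (r * B) * m r := integral_const_mul _ _
    calc (∑ i, u i * ∫ ω, W ω i * Real.exp (r * (u ⬝ᵥ W ω)) ∂μ)
        ≤ ∑ i, u i * (μv i * (Real.exp (r * B) * m r)) :=
          Finset.sum_le_sum fun i _ => mul_le_mul_of_nonneg_left (hterm i) (hu i)
      _ = A * Real.exp (r * B) * m r := by
          rw [hAdef, dotProduct, Finset.sum_mul, Finset.sum_mul]
          exact Finset.sum_congr rfl fun i _ => by ring
  have hφ : ∀ r : ℝ, HasDerivAt (fun r => A * (Real.exp (r * B) - 1) / B)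
      (A * Real.exp (r * B)) r := by
    intro r
    have h1 : HasDerivAt (fun r : ℝ => Real.exp (r * B)) (Real.exp (r * B) * B) r := by
      simpa using ((hasDerivAt_id r).mul_const B).exp
    have h2 := ((h1.sub_const 1).const_mul A).div_const B
    rw [mul_div_assoc, mul_div_cancel_right₀ _ hB.ne'] at h2
    exact h2
  set G : ℝ → ℝ := fun r => m r * Real.exp (-(A * (Real.exp (r * B) - 1) / B)) with hGdef
  have hG : ∀ r : ℝ, HasDerivAt G
      ((∫ ω, (u ⬝ᵥ W ω) * Real.exp (r * (u ⬝ᵥ W ω)) ∂μ)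
          * Real.exp (-(A * (Real.exp (r * B) - 1) / B))
        + m r * (Real.exp (-(A * (Real.exp (r * B) - 1) / B)) * -(A * Real.exp (r * B)))) r :=
    fun r => (hm_deriv r).mul ((hφ r).neg.exp)
  have hGanti : AntitoneOn G (Set.Ici (0 : ℝ)) := by
    apply antitoneOn_of_deriv_nonpos (convex_Ici 0)
    · exact (Differentiable.continuous fun r => (hG r).differentiableAt).continuousOn
    · exact Differentiable.differentiableOn fun r => (hG r).differentiableAt
    · intro x hx
      rw [interior_Ici] at hx
      rw [(hG x).deriv]
      have h1 := hODE x (le_of_lt hx)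
      have h2 := (Real.exp_pos (-(A * (Real.exp (x * B) - 1) / B))).le
      nlinarith [mul_nonneg (sub_nonneg.2 h1) h2]
  have hG0 : G 0 = 1 := by
    have hm0 : m 0 = 1 := by simp [hmdef]
    simp [hGdef, hm0]
  have hle : G s ≤ 1 := hG0 ▸ hGanti Set.self_mem_Ici (Set.mem_Ici.2 hs) hs
  have hexp := Real.exp_pos (A * (Real.exp (s * B) - 1) / B)
  rw [hGdef] at hle
  simp only at hle
  rw [Real.exp_neg, ← div_eq_mul_inv, div_le_one hexp] at hle
  exact hle

/-- Multivariate concentration via bounded size bias couplings: if `W` has nonnegative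
coordinates, mean `μ ≻ 0`, standard deviations `σ ≻ 0`, and `‖W - W^i‖₂ ≤ K` a.s. for
each direction-`i` size biased vector `W^i`, then with `σ_(1) = min_i σ_i`,
`K₁ = (2K/σ_(1))‖μ/σ‖₂`, `K₂ = K/(2σ_(1))`, for every `t ⪰ 0`,
`P((W - μ)/σ ⪰ t) ≤ exp(-‖t‖₂²/(2(K₁ + K₂‖t‖₂)))`. -/
theorem size_bias_concentration
    {Ω : Type*} [MeasurableSpace Ω] (μ : Measure Ω) [IsProbabilityMeasure μ]
    {k : ℕ} (W : Ω → Fin k → ℝ) (Ws : Fin k → Ω → Fin k → ℝ)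
    (hpos : ∀ ω i, 0 ≤ W ω i)
    (μv : Fin k → ℝ) (hμv : ∀ i, μv i = ∫ ω, W ω i ∂μ) (hμpos : ∀ i, 0 < μv i)
    (σv : Fin k → ℝ) (hσv : ∀ i, σv i ^ 2 = ∫ ω, (W ω i - μv i) ^ 2 ∂μ)
    (hσpos : ∀ i, 0 < σv i)
    (σmin : ℝ) (hσmin : IsLeast (Set.range σv) σmin)
    (hsb : ∀ (i : Fin k) (f : (Fin k → ℝ) → ℝ),
      Integrable (fun ω => W ω i * f (W ω)) μ → Integrable (fun ω => f (Ws i ω)) μ →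
      ∫ ω, W ω i * f (W ω) ∂μ = μv i * ∫ ω, f (Ws i ω) ∂μ)
    (K : ℝ) (hKpos : 0 < K)
    (hK : ∀ i, ∀ᵐ ω ∂μ, norm2 (fun j => W ω j - Ws i ω j) ≤ K)
    (hint : ∀ θ : Fin k → ℝ, Integrable (fun ω => Real.exp (θ ⬝ᵥ W ω)) μ)
    (hint' : ∀ (i : Fin k) (θ : Fin k → ℝ),
      Integrable (fun ω => Real.exp (θ ⬝ᵥ Ws i ω)) μ)
    (hint'' : ∀ (i : Fin k) (θ : Fin k → ℝ),
      Integrable (fun ω => W ω i * Real.exp (θ ⬝ᵥ W ω)) μ)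
    (t : Fin k → ℝ) (ht : ∀ i, 0 ≤ t i) :
    μ {ω | ∀ i, t i ≤ (W ω i - μv i) / σv i}
      ≤ ENNReal.ofReal (Real.exp (-(norm2 t ^ 2 /
          (2 * ((2 * K / σmin) * norm2 (fun i => μv i / σv i)
            + (K / (2 * σmin)) * norm2 t))))) := by
  classical
  obtain ⟨hmem, hlb⟩ := hσmin
  obtain ⟨j0, hj0⟩ := hmem
  have hσminpos : 0 < σmin := hj0 ▸ hσpos j0
  have hσminle : ∀ i, σmin ≤ σv i := fun i => hlb ⟨i, rfl⟩
  set T := norm2 t with hT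
  set N := norm2 (fun i => μv i / σv i) with hN
  have hNnn : 0 ≤ N := norm2_nonneg _
  by_cases hT0 : T = 0
  · have hexp1 : Real.exp (-(T ^ 2 /
        (2 * ((2 * K / σmin) * N + (K / (2 * σmin)) * T)))) = 1 := by
      rw [hT0]; norm_num
    rw [hexp1]
    simpa using prob_le_one
  have hTpos : 0 < T := lt_of_le_of_ne (norm2_nonneg t) (Ne.symm hT0)
  obtain ⟨j, hj⟩ : ∃ j, 0 < t j := by
    by_contra h
    push_neg at h
    have hz : ∀ j, t j = 0 := fun j => le_antisymm (h j) (ht j)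
    apply hT0
    rw [hT, norm2]
    simp [hz]
  set u : Fin k → ℝ := fun i => t i / σv i with hu
  have hunn : ∀ i, 0 ≤ u i := fun i => div_nonneg (ht i) (hσpos i).le
  have hnud : 0 < norm2 u := by
    rw [norm2, Real.sqrt_pos]
    exact Finset.sum_pos' (fun i _ => sq_nonneg _)
      ⟨j, Finset.mem_univ j, pow_pos (div_pos hj (hσpos j)) 2⟩
  set A : ℝ := u ⬝ᵥ μv with hAdef
  set B : ℝ := K * norm2 u with hBdef
  have hBpos : 0 < B := mul_pos hKpos hnud
  have hApos : 0 < A :=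
    Finset.sum_pos' (fun i _ => mul_nonneg (hunn i) (hμpos i).le)
      ⟨j, Finset.mem_univ j, mul_pos (div_pos hj (hσpos j)) (hμpos j)⟩
  have hTsq : T ^ 2 = ∑ i, t i ^ 2 := sq_norm2 t
  have hA_le : A ≤ T * N := by
    have h1 : A = t ⬝ᵥ (fun i => μv i / σv i) := by
      rw [hAdef]
      exact Finset.sum_congr rfl fun i _ => by
        rw [hu]; rw [div_mul_eq_mul_div, mul_div_assoc]
    rw [h1]
    exact dot_le_norm2 t _
  have hnu_le : norm2 u ≤ T / σmin := by
    have h1 : ∀ i, (t i / σv i) ^ 2 ≤ t i ^ 2 / σmin ^ 2 := by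
      intro i
      rw [div_pow]
      exact div_le_div_of_nonneg_left (sq_nonneg _) (by positivity)
        (pow_le_pow_left₀ hσminpos.le (hσminle i) 2)
    calc norm2 u ≤ Real.sqrt (∑ i, t i ^ 2 / σmin ^ 2) := by
          rw [norm2]
          exact Real.sqrt_le_sqrt (Finset.sum_le_sum fun i _ => h1 i)
      _ = T / σmin := by
          rw [← Finset.sum_div, Real.sqrt_div (Finset.sum_nonneg fun i _ => sq_nonneg _),
            Real.sqrt_sq hσminpos.le, hT, norm2]
  have hB2 : B ≤ 2 * (K / (2 * σmin)) * T := by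
    have h1 : B ≤ K * (T / σmin) := by
      rw [hBdef]
      exact mul_le_mul_of_nonneg_left hnu_le hKpos.le
    have h2 : K * (T / σmin) = 2 * (K / (2 * σmin)) * T := by
      field_simp
    linarith
  have hAB : A * B ≤ (2 * K / σmin) * N * T ^ 2 / 2 := by
    have h1 : A * B ≤ (T * N) * (K * (T / σmin)) := by
      apply mul_le_mul hA_le _ hBpos.le (by positivity)
      rw [hBdef]
      exact mul_le_mul_of_nonneg_left hnu_le hKpos.le
    have h2 : (T * N) * (K * (T / σmin)) = (2 * K / σmin) * N * T ^ 2 / 2 := by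
      field_simp
    linarith
  set s : ℝ := T ^ 2 / (A * B + B * T ^ 2 / 3) with hsdef
  have hsnn : 0 ≤ s := by positivity
  have hintc : Integrable (fun ω => Real.exp (s * (u ⬝ᵥ W ω))) μ := by
    simpa [smul_dotProduct, smul_eq_mul] using hint (s • u)
  have hmgf := mgf_bound_s19 μ W Ws hpos μv (fun i => (hμpos i).le) hsb K hK hint hint' hint''
    u hunn hBpos s hsnn
  have hK2pos : 0 < K / (2 * σmin) := by positivity
  have hK1nn : 0 ≤ (2 * K / σmin) * N := by positivity
  have hexpb := exponent_bound hApos hBpos hTpos hK1nn hK2pos hAB hB2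
  rw [← hsdef] at hexpb
  -- Chernoff step
  have hsub : {ω | ∀ i, t i ≤ (W ω i - μv i) / σv i}
      ⊆ {ω | Real.exp (s * (A + T ^ 2)) ≤ Real.exp (s * (u ⬝ᵥ W ω))} := by
    intro ω hω
    simp only [Set.mem_setOf_eq] at hω ⊢
    apply Real.exp_le_exp.2
    apply mul_le_mul_of_nonneg_left _ hsnn
    have hWi : ∀ i, μv i + σv i * t i ≤ W ω i := by
      intro i
      have h1 := (le_div_iff₀ (hσpos i)).1 (hω i)
      linarith
    calc A + T ^ 2 = ∑ i, (u i * μv i + t i ^ 2) := by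
          rw [hTsq, Finset.sum_add_distrib]
          rfl
      _ ≤ ∑ i, u i * W ω i := by
        apply Finset.sum_le_sum
        intro i _
        have h2 : u i * (μv i + σv i * t i) = u i * μv i + t i ^ 2 := by
          rw [hu]
          field_simp [(hσpos i).ne']
        rw [← h2]
        exact mul_le_mul_of_nonneg_left (hWi i) (hunn i)
      _ = u ⬝ᵥ W ω := rfl
  have hmark := mul_meas_ge_le_integral_of_nonneg (μ := μ)
    (f := fun ω => Real.exp (s * (u ⬝ᵥ W ω)))
    (Filter.Eventually.of_forall fun ω => (Real.exp_pos _).le) hintc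
    (Real.exp (s * (A + T ^ 2)))
  set S := {ω | Real.exp (s * (A + T ^ 2)) ≤ Real.exp (s * (u ⬝ᵥ W ω))} with hSdef
  have hfinS : μ S ≠ ⊤ := measure_ne_top μ S
  have htoReal : (μ S).toReal
      ≤ (∫ ω, Real.exp (s * (u ⬝ᵥ W ω)) ∂μ) / Real.exp (s * (A + T ^ 2)) := by
    rw [le_div_iff₀ (Real.exp_pos _)]
    calc (μ S).toReal * Real.exp (s * (A + T ^ 2))
        = Real.exp (s * (A + T ^ 2)) * (μ S).toReal := by ring
      _ ≤ ∫ ω, Real.exp (s * (u ⬝ᵥ W ω)) ∂μ := hmark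
  rw [← hAdef, ← hBdef] at hmgf
  have hfinal : (∫ ω, Real.exp (s * (u ⬝ᵥ W ω)) ∂μ) / Real.exp (s * (A + T ^ 2))
      ≤ Real.exp (-(T ^ 2 / (2 * ((2 * K / σmin) * N + (K / (2 * σmin)) * T)))) := by
    calc (∫ ω, Real.exp (s * (u ⬝ᵥ W ω)) ∂μ) / Real.exp (s * (A + T ^ 2))
        ≤ Real.exp (A * (Real.exp (s * B) - 1) / B) / Real.exp (s * (A + T ^ 2)) := by
          gcongr
      _ = Real.exp (A * (Real.exp (s * B) - 1) / B - s * (A + T ^ 2)) := by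
          rw [Real.exp_sub]
      _ ≤ Real.exp (-(T ^ 2 / (2 * ((2 * K / σmin) * N + (K / (2 * σmin)) * T)))) :=
          Real.exp_le_exp.2 hexpb
  calc μ {ω | ∀ i, t i ≤ (W ω i - μv i) / σv i}
      ≤ μ S := measure_mono hsub
    _ = ENNReal.ofReal (μ S).toReal := (ENNReal.ofReal_toReal hfinS).symm
    _ ≤ ENNReal.ofReal (Real.exp (-(T ^ 2 /
          (2 * ((2 * K / σmin) * N + (K / (2 * σmin)) * T))))) :=
        ENNReal.ofReal_le_ofReal (le_trans htoReal hfinal)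
end
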